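/- arXiv:1302.2617 — 7 statements merged into one kernel-verified Lean document; each statement's English description precedes it below -/
import Mathlib

section
/- There exists a constant C > 0 such that for all x > 0, K_0(x) ≥ C · e^{−x} / (1 + √x). -/
open MeasureTheory

/-- The modified Bessel function of the second kind. -/
noncomputable def besselK (ν x : ℝ) : ℝ :=
  ∫ t in Set.Ioi (0:ℝ), Real.exp (-x * Real.cosh t) * Real.cosh (ν * t)

lemma cosh_le_one_add_sq {t : ℝ} (h0 : 0 ≤ t) (h1 : t ≤ 1) : Real.cosh t ≤ 1 + t ^ 2 := by
  have hb1 := Real.exp_bound (x := t) (by rwa [abs_of_nonneg h0]) (n := 3) (by norm_num)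
  have hb2 := Real.exp_bound (x := -t) (by rwa [abs_neg, abs_of_nonneg h0]) (n := 3)
    (by norm_num)
  rw [Real.cosh_eq]
  have habs : |t| = t := abs_of_nonneg h0
  simp only [Finset.sum_range_succ, Finset.sum_range_zero] at hb1 hb2
  rw [abs_le] at hb1 hb2
  norm_num [Nat.factorial] at hb1 hb2
  rw [habs] at hb1
  rw [habs] at hb2
  nlinarith [mul_le_mul_of_nonneg_left h1 (sq_nonneg t), sq_nonneg t, pow_nonneg h0 3]

lemma integrable_exp_neg_mul_cosh {x : ℝ} (hx : 0 < x) :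
    IntegrableOn (fun t => Real.exp (-x * Real.cosh t)) (Set.Ioi (0:ℝ)) := by
  apply (exp_neg_integrableOn_Ioi 0 hx).mono' ?_ ?_
  · exact (Real.continuous_exp.comp ((continuous_const.mul Real.continuous_cosh))).aestronglyMeasurable
  · filter_upwards [ae_restrict_mem measurableSet_Ioi] with t ht
    rw [Real.norm_eq_abs, abs_of_pos (Real.exp_pos _)]
    apply Real.exp_le_exp.2
    have h1 : t ≤ Real.sinh t := (Real.self_le_sinh_iff.2 ht.le)
    have h2 : Real.sinh t ≤ Real.cosh t := by
      nlinarith [Real.cosh_sub_sinh t, Real.exp_pos (-t)]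
    nlinarith [hx.le]

/-- There is `C > 0` with `K_0(x) ≥ C e^{-x} / (1 + √x)` for all `x > 0`. -/
theorem besselK_zero_lower_bound :
    ∃ C > 0, ∀ x > 0,
      C * Real.exp (-x) / (1 + Real.sqrt x) ≤ besselK 0 x := by
  refine ⟨Real.exp (-1), Real.exp_pos _, fun x hx => ?_⟩
  have hsx : 0 < Real.sqrt x := Real.sqrt_pos.2 hx
  set L : ℝ := 1 / (1 + Real.sqrt x) with hL
  have hL0 : 0 < L := by positivity
  have hL1 : L ≤ 1 := by
    rw [hL, div_le_one (by positivity)]; linarith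
  have hxL : x * L ^ 2 ≤ 1 := by
    have h1 : L ≤ 1 / Real.sqrt x := by
      apply div_le_div_of_nonneg_left one_pos.le hsx; linarith
    have h2 : L ^ 2 ≤ (1 / Real.sqrt x) ^ 2 := by
      apply pow_le_pow_left₀ hL0.le h1
    have h3 : (1 / Real.sqrt x) ^ 2 = 1 / x := by
      rw [div_pow, one_pow, Real.sq_sqrt hx.le]
    rw [h3] at h2
    calc x * L ^ 2 ≤ x * (1 / x) := by nlinarith
    _ = 1 := by field_simp
  have hint := integrable_exp_neg_mul_cosh hx
  have hbk : besselK 0 x = ∫ t in Set.Ioi (0:ℝ), Real.exp (-x * Real.cosh t) := by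
    unfold besselK; simp
  rw [hbk]
  have key : Real.exp (-1) * Real.exp (-x) * L ≤
      ∫ t in Set.Ioc (0:ℝ) L, Real.exp (-x * Real.cosh t) := by
    have := setIntegral_ge_of_const_le (μ := volume) (c := Real.exp (-1) * Real.exp (-x))
      (s := Set.Ioc (0:ℝ) L) measurableSet_Ioc (by simp) ?_
      (hint.mono_set Set.Ioc_subset_Ioi_self)
    · rw [Real.volume_real_Ioc_of_le hL0.le] at this
      simpa [ENNReal.toReal_ofReal hL0.le, sub_zero, mul_comm] using this
    · intro t ht
      rw [← Real.exp_add]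
      apply Real.exp_le_exp.2
      have ht0 : 0 < t := ht.1
      have htL : t ≤ L := ht.2
      have hc : Real.cosh t ≤ 1 + t ^ 2 := cosh_le_one_add_sq ht0.le (htL.trans hL1)
      have hxt : x * t ^ 2 ≤ 1 := by
        calc x * t ^ 2 ≤ x * L ^ 2 := by nlinarith [pow_le_pow_left₀ ht0.le htL 2]
        _ ≤ 1 := hxL
      nlinarith
  calc Real.exp (-1) * Real.exp (-x) / (1 + Real.sqrt x)
      = Real.exp (-1) * Real.exp (-x) * L := by rw [hL]; ring
    _ ≤ ∫ t in Set.Ioc (0:ℝ) L, Real.exp (-x * Real.cosh t) := key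
    _ ≤ ∫ t in Set.Ioi (0:ℝ), Real.exp (-x * Real.cosh t) := by
        apply setIntegral_mono_set hint ?_ (HasSubset.Subset.eventuallyLE Set.Ioc_subset_Ioi_self)
        filter_upwards with t using (Real.exp_pos _).le
end

section
/- Let d ≥ 2 be an integer. The function x ↦ K_{d/2−1}(x) is differentiable on (0, ∞), and for every η ∈ (0, 1) there exists a constant C_{d,η} > 0 such that for all x > 0, |K_{d/2−1}′(x)| ≤ C_{d,η} · e^{−(1−η)x} / x^{(d+1)/2}. -/
open MeasureTheory

private lemma aux_rpow_exp {s z : ℝ} (hs : 0 < s) (hz : 0 < z) :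
    z ^ s * Real.exp (-z) ≤ s ^ s * Real.exp (-s) := by
  rw [Real.rpow_def_of_pos hz, Real.rpow_def_of_pos hs, ← Real.exp_add, ← Real.exp_add]
  apply Real.exp_le_exp.mpr
  have h := Real.log_le_sub_one_of_pos (div_pos hz hs)
  rw [Real.log_div hz.ne' hs.ne'] at h
  have h2 := mul_le_mul_of_nonneg_left h hs.le
  have h3 : s * (z / s) = z := by field_simp
  rw [mul_sub, mul_sub, h3] at h2
  nlinarith

private lemma integrand_nonneg (ν y t : ℝ) :
    0 ≤ Real.exp (-y * Real.cosh t) * Real.cosh t * Real.cosh (ν * t) :=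
  mul_nonneg (mul_nonneg (Real.exp_pos _).le (Real.cosh_pos t).le) (Real.cosh_pos (ν * t)).le

/-- Key pointwise bound for the integrand of the derivative. -/
private lemma key_bound {ν y t : ℝ} (hν : 0 ≤ ν) (hy : 0 < y) (ht : 0 ≤ t) :
    Real.exp (-y * Real.cosh t) * Real.cosh t * Real.cosh (ν * t) ≤
      (2 ^ ν * ((ν + 3/2) ^ (ν + 3/2) * Real.exp (-(ν + 3/2))) * Real.sqrt 2)
        * y ^ (-(ν + 3/2)) * Real.exp (-(1/2) * t) := by
  set s : ℝ := ν + 3/2 with hs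
  set c : ℝ := Real.cosh t with hc
  have hc1 : (1:ℝ) ≤ c := Real.one_le_cosh t
  have hc0 : (0:ℝ) < c := lt_of_lt_of_le one_pos hc1
  have hs0 : (0:ℝ) < s := by rw [hs]; linarith
  -- cosh (ν t) ≤ 2^ν * c^ν
  have h1 : Real.cosh (ν * t) ≤ 2 ^ ν * c ^ ν := by
    have hνt : 0 ≤ ν * t := mul_nonneg hν ht
    have e1 : Real.cosh (ν * t) ≤ Real.exp (ν * t) := by
      rw [Real.cosh_eq]
      have := Real.exp_le_exp.2 (neg_le_self hνt)
      linarith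
    have e2 : Real.exp (ν * t) = Real.exp t ^ ν := by
      rw [← Real.exp_mul, mul_comm]
    have e3 : Real.exp t ≤ 2 * c := by
      rw [hc, Real.cosh_eq]
      have := Real.exp_pos (-t)
      linarith
    have e4 : Real.exp t ^ ν ≤ (2 * c) ^ ν :=
      Real.rpow_le_rpow (Real.exp_pos t).le e3 hν
    rw [Real.mul_rpow (by norm_num) hc0.le] at e4
    calc Real.cosh (ν * t) ≤ Real.exp t ^ ν := e2 ▸ e1
      _ ≤ 2 ^ ν * c ^ ν := e4
  -- exp(-y c) * c^s ≤ s^s exp(-s) * y^(-s)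
  have h4 : Real.exp (-y * c) * c ^ s ≤ s ^ s * Real.exp (-s) * y ^ (-s) := by
    have haux := aux_rpow_exp hs0 (mul_pos hy hc0)
    have hcs : c ^ s = y ^ (-s) * (y * c) ^ s := by
      rw [Real.mul_rpow hy.le hc0.le, ← mul_assoc, ← Real.rpow_add hy,
        neg_add_cancel, Real.rpow_zero, one_mul]
    calc Real.exp (-y * c) * c ^ s
        = ((y * c) ^ s * Real.exp (-(y * c))) * y ^ (-s) := by
          rw [hcs, neg_mul]; ring
      _ ≤ (s ^ s * Real.exp (-s)) * y ^ (-s) :=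
          mul_le_mul_of_nonneg_right haux (Real.rpow_nonneg hy.le _)
  -- c^(-(1/2)) ≤ √2 * exp(-(1/2) t)
  have h5 : c ^ (-(1/2):ℝ) ≤ Real.sqrt 2 * Real.exp (-(1/2) * t) := by
    have e3 : Real.exp t / 2 ≤ c := by
      rw [hc, Real.cosh_eq]
      have := Real.exp_pos (-t)
      linarith
    have e6 : c ^ (-(1/2):ℝ) ≤ (Real.exp t / 2) ^ (-(1/2):ℝ) :=
      Real.rpow_le_rpow_of_nonpos (by positivity) e3 (by norm_num)
    have e7 : (Real.exp t / 2) ^ (-(1/2):ℝ) = Real.sqrt 2 * Real.exp (-(1/2) * t) := by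
      rw [Real.div_rpow (Real.exp_pos t).le (by norm_num), ← Real.exp_mul,
        Real.rpow_neg (by norm_num : (0:ℝ) ≤ 2), ← Real.sqrt_eq_rpow, div_inv_eq_mul]
      rw [mul_comm]
      congr 1
      ring_nf
    exact e6.trans e7.le
  -- combine
  have hcc : c ^ ν * c = c ^ s * c ^ (-(1/2):ℝ) := by
    rw [← Real.rpow_add hc0]
    have : s + (-(1/2):ℝ) = ν + 1 := by rw [hs]; ring
    rw [this, Real.rpow_add_one hc0.ne']
  calc Real.exp (-y * c) * c * Real.cosh (ν * t)
      ≤ Real.exp (-y * c) * c * (2 ^ ν * c ^ ν) := by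
        apply mul_le_mul_of_nonneg_left h1
        exact mul_nonneg (Real.exp_pos _).le hc0.le
    _ = 2 ^ ν * (Real.exp (-y * c) * (c ^ ν * c)) := by ring
    _ = 2 ^ ν * ((Real.exp (-y * c) * c ^ s) * c ^ (-(1/2):ℝ)) := by rw [hcc]; ring
    _ ≤ 2 ^ ν * ((s ^ s * Real.exp (-s) * y ^ (-s)) * (Real.sqrt 2 * Real.exp (-(1/2) * t))) := by
        apply mul_le_mul_of_nonneg_left _ (Real.rpow_nonneg (by norm_num) ν)
        apply mul_le_mul h4 h5 (Real.rpow_nonneg hc0.le _)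
        positivity
    _ = (2 ^ ν * (s ^ s * Real.exp (-s)) * Real.sqrt 2) * y ^ (-s)
          * Real.exp (-(1/2) * t) := by ring

private lemma integrableOn_deriv_integrand {ν y : ℝ} (hν : 0 ≤ ν) (hy : 0 < y) :
    IntegrableOn (fun t => Real.exp (-y * Real.cosh t) * Real.cosh t * Real.cosh (ν * t))
      (Set.Ioi (0:ℝ)) := by
  set A : ℝ := (2 ^ ν * ((ν + 3/2) ^ (ν + 3/2) * Real.exp (-(ν + 3/2))) * Real.sqrt 2)
    * y ^ (-(ν + 3/2)) with hA
  have hbint : IntegrableOn (fun t => A * Real.exp (-(1/2) * t)) (Set.Ioi (0:ℝ)) :=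
    (exp_neg_integrableOn_Ioi 0 (by norm_num)).const_mul A
  apply hbint.mono'
  · exact Continuous.aestronglyMeasurable (by fun_prop)
  · rw [ae_restrict_iff' measurableSet_Ioi]
    filter_upwards with t
    intro ht
    rw [Real.norm_eq_abs, abs_of_nonneg (integrand_nonneg ν y t)]
    calc Real.exp (-y * Real.cosh t) * Real.cosh t * Real.cosh (ν * t)
        ≤ (2 ^ ν * ((ν + 3/2) ^ (ν + 3/2) * Real.exp (-(ν + 3/2))) * Real.sqrt 2)
            * y ^ (-(ν + 3/2)) * Real.exp (-(1/2) * t) := key_bound hν hy ht.le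
      _ = A * Real.exp (-(1/2) * t) := by rw [hA]

private lemma integrableOn_F {ν y : ℝ} (hν : 0 ≤ ν) (hy : 0 < y) :
    IntegrableOn (fun t => Real.exp (-y * Real.cosh t) * Real.cosh (ν * t))
      (Set.Ioi (0:ℝ)) := by
  apply (integrableOn_deriv_integrand hν hy).mono'
  · exact Continuous.aestronglyMeasurable (by fun_prop)
  · filter_upwards with t
    rw [Real.norm_eq_abs,
      abs_of_nonneg (mul_nonneg (Real.exp_pos _).le (Real.cosh_pos _).le)]
    have h1 : (1:ℝ) ≤ Real.cosh t := Real.one_le_cosh t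
    have := mul_le_mul_of_nonneg_right
      (mul_le_mul_of_nonneg_left h1 (Real.exp_pos (-y * Real.cosh t)).le)
      (Real.cosh_pos (ν * t)).le
    simpa using this

private lemma besselK_hasDerivAt {ν x : ℝ} (hν : 0 ≤ ν) (hx : 0 < x) :
    HasDerivAt (besselK ν)
      (∫ t in Set.Ioi (0:ℝ),
        -(Real.exp (-x * Real.cosh t) * Real.cosh t * Real.cosh (ν * t))) x := by
  have key := hasDerivAt_integral_of_dominated_loc_of_deriv_le
    (F := fun (x : ℝ) (t : ℝ) => Real.exp (-x * Real.cosh t) * Real.cosh (ν * t))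
    (F' := fun (x : ℝ) (t : ℝ) =>
      -(Real.exp (-x * Real.cosh t) * Real.cosh t * Real.cosh (ν * t)))
    (x₀ := x)
    (bound := fun t => Real.exp (-(x/2) * Real.cosh t) * Real.cosh t * Real.cosh (ν * t))
    (μ := volume.restrict (Set.Ioi (0:ℝ)))
    (Metric.ball_mem_nhds x (half_pos hx))
    (Filter.Eventually.of_forall fun y => Continuous.aestronglyMeasurable (by fun_prop))
    (integrableOn_F hν hx)
    (Continuous.aestronglyMeasurable (by fun_prop))
    ?_ (integrableOn_deriv_integrand hν (half_pos hx)) ?_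
  · exact key.2
  · filter_upwards with t
    intro x' hx'
    rw [Metric.mem_ball, Real.dist_eq, abs_lt] at hx'
    have hx2 : x / 2 ≤ x' := by linarith [hx'.1]
    rw [norm_neg, Real.norm_eq_abs, abs_of_nonneg (integrand_nonneg ν x' t)]
    have hexp : Real.exp (-x' * Real.cosh t) ≤ Real.exp (-(x/2) * Real.cosh t) := by
      apply Real.exp_le_exp.2
      have hc := (Real.cosh_pos t).le
      nlinarith
    exact mul_le_mul_of_nonneg_right
      (mul_le_mul_of_nonneg_right hexp (Real.cosh_pos t).le) (Real.cosh_pos (ν * t)).le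
  · filter_upwards with t
    intro x' _
    have h1 : HasDerivAt (fun x : ℝ => -x * Real.cosh t) (-Real.cosh t) x' := by
      simpa using (hasDerivAt_id x').neg.mul_const (Real.cosh t)
    have h2 := h1.exp.mul_const (Real.cosh (ν * t))
    convert h2 using 1
    · rfl
    · ring

/-- For `d ≥ 2`, `x ↦ K_{d/2-1}(x)` is differentiable on `(0,∞)` and for every `η ∈ (0,1)`
there is `C > 0` with `|K_{d/2-1}'(x)| ≤ C e^{-(1-η)x} / x^{(d+1)/2}` for all `x > 0`. -/
theorem besselK_deriv_bound (d : ℕ) (hd : 2 ≤ d) :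
    DifferentiableOn ℝ (besselK ((d : ℝ) / 2 - 1)) (Set.Ioi 0) ∧
    ∀ η ∈ Set.Ioo (0:ℝ) 1, ∃ C > 0, ∀ x > 0,
      |deriv (besselK ((d : ℝ) / 2 - 1)) x|
        ≤ C * Real.exp (-(1 - η) * x) / x ^ (((d : ℝ) + 1) / 2) := by
  have hd2 : (2:ℝ) ≤ (d:ℝ) := by exact_mod_cast hd
  set ν : ℝ := (d:ℝ)/2 - 1 with hνdef
  have hν : 0 ≤ ν := by rw [hνdef]; linarith
  have hderiv : ∀ x : ℝ, 0 < x → HasDerivAt (besselK ν)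
      (∫ t in Set.Ioi (0:ℝ),
        -(Real.exp (-x * Real.cosh t) * Real.cosh t * Real.cosh (ν * t))) x :=
    fun x hx => besselK_hasDerivAt hν hx
  constructor
  · intro x hx
    exact (hderiv x hx).differentiableAt.differentiableWithinAt
  · rintro η ⟨hη0, hη1⟩
    set s : ℝ := ((d:ℝ) + 1)/2 with hsdef
    have hνs : ν + 3/2 = s := by rw [hνdef, hsdef]; ring
    have hs0 : (0:ℝ) < s := by rw [hsdef]; positivity
    set A : ℝ := 2 ^ ν * (s ^ s * Real.exp (-s)) * Real.sqrt 2 with hAdef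
    have hA0 : 0 < A := by
      rw [hAdef]
      have := Real.rpow_pos_of_pos (show (0:ℝ) < 2 by norm_num) ν
      have := Real.rpow_pos_of_pos hs0 s
      positivity
    have hI : (∫ t in Set.Ioi (0:ℝ), Real.exp (-(1/2) * t)) = 2 := by
      have h := integral_comp_mul_left_Ioi (fun u => Real.exp (-u)) 0
        (by norm_num : (0:ℝ) < 1/2)
      simp only [mul_zero] at h
      rw [integral_exp_neg_Ioi_zero] at h
      simp only [neg_mul] at h ⊢
      rw [h]
      norm_num
    refine ⟨2 * A * η ^ (-s), by positivity, fun x hx => ?_⟩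
    rw [(hderiv x hx).deriv]
    have hηx : 0 < η * x := mul_pos hη0 hx
    -- pointwise bound
    have hpt : ∀ t ∈ Set.Ioi (0:ℝ),
        ‖-(Real.exp (-x * Real.cosh t) * Real.cosh t * Real.cosh (ν * t))‖ ≤
          (Real.exp (-(1 - η) * x) * (A * (η * x) ^ (-s))) * Real.exp (-(1/2) * t) := by
      intro t ht
      rw [norm_neg, Real.norm_eq_abs, abs_of_nonneg (integrand_nonneg ν x t)]
      have hc1 : (1:ℝ) ≤ Real.cosh t := Real.one_le_cosh t
      have hsplit : Real.exp (-x * Real.cosh t)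
          = Real.exp (-(1 - η) * x * Real.cosh t) * Real.exp (-(η * x) * Real.cosh t) := by
        rw [← Real.exp_add]
        congr 1
        ring
      have he1 : Real.exp (-(1 - η) * x * Real.cosh t) ≤ Real.exp (-(1 - η) * x) := by
        apply Real.exp_le_exp.2
        have h0 : 0 ≤ (1 - η) * x := mul_nonneg (by linarith) hx.le
        nlinarith [mul_le_mul_of_nonneg_left hc1 h0]
      have hkb := key_bound hν hηx (le_of_lt ht)
      rw [hνs] at hkb
      calc Real.exp (-x * Real.cosh t) * Real.cosh t * Real.cosh (ν * t)
          = Real.exp (-(1 - η) * x * Real.cosh t)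
              * (Real.exp (-(η * x) * Real.cosh t) * Real.cosh t * Real.cosh (ν * t)) := by
            rw [hsplit]; ring
        _ ≤ Real.exp (-(1 - η) * x)
              * (A * (η * x) ^ (-s) * Real.exp (-(1/2) * t)) := by
            apply mul_le_mul he1 ?_ (integrand_nonneg ν (η * x) t) (Real.exp_pos _).le
            calc Real.exp (-(η * x) * Real.cosh t) * Real.cosh t * Real.cosh (ν * t)
                ≤ (2 ^ ν * (s ^ s * Real.exp (-s)) * Real.sqrt 2)
                    * (η * x) ^ (-s) * Real.exp (-(1/2) * t) := hkb
              _ = A * (η * x) ^ (-s) * Real.exp (-(1/2) * t) := by rw [hAdef]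
        _ = (Real.exp (-(1 - η) * x) * (A * (η * x) ^ (-s))) * Real.exp (-(1/2) * t) := by
            ring
    have hint : Integrable (fun t =>
        (Real.exp (-(1 - η) * x) * (A * (η * x) ^ (-s))) * Real.exp (-(1/2) * t))
        (volume.restrict (Set.Ioi (0:ℝ))) :=
      (exp_neg_integrableOn_Ioi 0 (by norm_num)).const_mul _
    calc |∫ t in Set.Ioi (0:ℝ),
            -(Real.exp (-x * Real.cosh t) * Real.cosh t * Real.cosh (ν * t))|
        ≤ ∫ t in Set.Ioi (0:ℝ),
            ‖-(Real.exp (-x * Real.cosh t) * Real.cosh t * Real.cosh (ν * t))‖ := by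
          rw [← Real.norm_eq_abs]
          exact norm_integral_le_integral_norm _
      _ ≤ ∫ t in Set.Ioi (0:ℝ),
            (Real.exp (-(1 - η) * x) * (A * (η * x) ^ (-s))) * Real.exp (-(1/2) * t) := by
          apply integral_mono_of_nonneg
            (Filter.Eventually.of_forall fun t => norm_nonneg _) hint
          exact (ae_restrict_iff' measurableSet_Ioi).2 (Filter.Eventually.of_forall hpt)
      _ = (Real.exp (-(1 - η) * x) * (A * (η * x) ^ (-s))) * 2 := by
          rw [integral_const_mul, hI]
      _ = 2 * A * η ^ (-s) * Real.exp (-(1 - η) * x) / x ^ s := by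
          rw [Real.mul_rpow hη0.le hx.le, Real.rpow_neg hx.le, div_eq_mul_inv]
          ring
end

section
/- Let d ≥ 1 be an integer. The function x ↦ K_{d/2−1}(|x|)·|x|^{1−d/2} is integrable on ℝ^d, and for every ξ ∈ ℝ^d one has ∫_{ℝ^d} e^{−i⟨x,ξ⟩} · K_{d/2−1}(|x|) · |x|^{1−d/2} dx = (2π)^{d/2} / (1 + |ξ|²). In particular the interaction potential φ(x) := (2π)^{−d/2} · K_{d/2−1}(|x|) · |x|^{1−d/2} satisfies ∫_{ℝ^d} e^{−i⟨x,ξ⟩} φ(x) dx = 1/(1 + |ξ|²) and ∫_{ℝ^d} φ(x) dx = 1. -/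
open MeasureTheory Set Real
open scoped RealInnerProductSpace

lemma cosh_ge_sq (s : ℝ) : s^2/8 ≤ Real.cosh s := by
  have h1 : |s|/2 + 1 ≤ Real.exp (|s|/2) := by linarith [Real.add_one_le_exp (|s|/2)]
  have h2 : Real.exp (|s|/2) * Real.exp (|s|/2) = Real.exp |s| := by
    rw [← Real.exp_add]; ring_nf
  have h3 : Real.exp |s| ≤ 2 * Real.cosh s := by
    rw [Real.cosh_eq]
    rcases abs_cases s with ⟨h,_⟩|⟨h,_⟩ <;> rw [h] <;>
      nlinarith [Real.exp_pos s, Real.exp_pos (-s)]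
  nlinarith [abs_nonneg s, sq_abs s, Real.exp_pos (|s|/2)]

lemma integrable_exp_cosh {a : ℝ} (ν : ℝ) (ha : 0 < a) :
    Integrable (fun s : ℝ => Real.exp (-a * Real.cosh s + ν * s)) := by
  have hmaj : Integrable (fun s : ℝ => Real.exp (4*ν^2/a) * Real.exp (-(a/16) * s^2)) :=
    (integrable_exp_neg_mul_sq (by positivity)).const_mul _
  refine hmaj.mono' ?_ ?_
  · exact (Real.continuous_exp.comp (by continuity)).aestronglyMeasurable
  · filter_upwards with s
    rw [Real.norm_eq_abs, abs_of_pos (Real.exp_pos _), ← Real.exp_add, Real.exp_le_exp]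
    have h1 := cosh_ge_sq s
    have h2 : ν * s ≤ a/16 * s^2 + 4*ν^2/a := by
      have h3 : 0 ≤ (a*s - 8*ν)^2 := sq_nonneg _
      have h4 : a * (a/16 * s^2 + 4*ν^2/a - ν*s) = ((a*s-8*ν)^2)/16 := by
        field_simp; ring
      nlinarith [mul_pos ha ha]
    nlinarith

lemma besselK_half (ν a : ℝ) (ha : 0 < a) :
    besselK ν a = (1/2) * ∫ s : ℝ, Real.exp (-a * Real.cosh s + ν * s) := by
  have hint := integrable_exp_cosh (a := a) ν ha
  have hsplit : (∫ s : ℝ, Real.exp (-a * Real.cosh s + ν * s))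
      = (∫ s in Iic (0:ℝ), Real.exp (-a * Real.cosh s + ν * s))
        + ∫ s in Ioi (0:ℝ), Real.exp (-a * Real.cosh s + ν * s) :=
    (intervalIntegral.integral_Iic_add_Ioi hint.integrableOn hint.integrableOn).symm
  have hneg : (∫ s in Iic (0:ℝ), Real.exp (-a * Real.cosh s + ν * s))
      = ∫ s in Ioi (0:ℝ), Real.exp (-a * Real.cosh s - ν * s) := by
    have := integral_comp_neg_Ioi (0:ℝ) (fun s => Real.exp (-a * Real.cosh s + ν * s))
    rw [neg_zero] at this
    rw [← this]
    refine setIntegral_congr_fun measurableSet_Ioi fun s _ => ?_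
    rw [Real.cosh_neg]; ring_nf
  rw [hsplit, hneg, besselK]
  rw [← integral_add ((integrable_exp_cosh (-ν) ha).integrableOn.congr_fun
      (fun s _ => by ring_nf) measurableSet_Ioi) ((integrable_exp_cosh ν ha).integrableOn)]
  rw [← integral_const_mul]
  refine setIntegral_congr_fun measurableSet_Ioi fun s _ => ?_
  rw [Real.cosh_eq (ν * s), sub_eq_add_neg, ← neg_mul, Real.exp_add, Real.exp_add]
  ring

lemma besselK_rep (ν a : ℝ) (ha : 0 < a) :
    besselK ν a = ∫ t in Ioi (0:ℝ),
      Real.exp (-(t + a^2/(4*t))) * (2*t/a)^ν / (2*t) := by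
  rw [besselK_half ν a ha]
  have himg : (fun s : ℝ => a/2 * Real.exp s) '' univ = Ioi 0 := by
    ext y
    simp only [image_univ, mem_range, mem_Ioi]
    constructor
    · rintro ⟨x, rfl⟩; positivity
    · intro hy
      exact ⟨Real.log (2*y/a), by
        rw [Real.exp_log (by positivity)]; field_simp⟩
  have hderiv : ∀ x ∈ (univ : Set ℝ),
      HasDerivWithinAt (fun s : ℝ => a/2 * Real.exp s) (a/2 * Real.exp x) univ x :=
    fun x _ => ((Real.hasDerivAt_exp x).const_mul (a/2)).hasDerivWithinAt
  have hinj : InjOn (fun s : ℝ => a/2 * Real.exp s) univ := by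
    intro x _ y _ h
    simp only at h
    exact Real.exp_injective (mul_left_cancel₀ (by positivity) h)
  have := integral_image_eq_integral_abs_deriv_smul MeasurableSet.univ hderiv hinj
    (fun t => Real.exp (-(t + a^2/(4*t))) * (2*t/a)^ν / (2*t))
  rw [himg] at this
  rw [this, setIntegral_univ, ← integral_const_mul]
  refine integral_congr_ae (Filter.Eventually.of_forall fun x => ?_)
  have hex := Real.exp_pos x
  have ht : (0:ℝ) < a/2 * Real.exp x := by positivity
  show 1/2 * Real.exp (-a * Real.cosh x + ν * x) = _
  simp only [smul_eq_mul]
  rw [abs_of_pos ht]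
  have h1 : a/2 * Real.exp x + a^2/(4*(a/2 * Real.exp x)) = a * Real.cosh x := by
    rw [Real.cosh_eq, Real.exp_neg]
    field_simp; ring
  have h2 : 2*(a/2 * Real.exp x)/a = Real.exp x := by field_simp
  have h3 : (Real.exp x) ^ ν = Real.exp (ν * x) := by
    rw [← Real.exp_mul, mul_comm]
  rw [h1, h2, h3]
  rw [Real.exp_add]
  field_simp

lemma key_rep (d : ℕ) (a : ℝ) (ha : 0 < a) :
    besselK ((d:ℝ)/2 - 1) a * a ^ (1 - (d:ℝ)/2) =
      ∫ t in Ioi (0:ℝ), Real.exp (-(t + a^2/(4*t))) * (2*t) ^ (-(d:ℝ)/2) := by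
  have heven : besselK ((d:ℝ)/2 - 1) a = besselK (1 - (d:ℝ)/2) a := by
    unfold besselK
    refine setIntegral_congr_fun measurableSet_Ioi fun t _ => ?_
    rw [show (1 - (d:ℝ)/2) * t = -(((d:ℝ)/2 - 1) * t) by ring, Real.cosh_neg]
  rw [heven, besselK_rep _ a ha, ← integral_mul_const]
  refine setIntegral_congr_fun measurableSet_Ioi fun t ht => ?_
  have ht' : (0:ℝ) < t := ht
  have h2t : (0:ℝ) < 2*t := by linarith
  have h1 : (2*t/a) ^ (1 - (d:ℝ)/2) * a ^ (1 - (d:ℝ)/2) = (2*t) ^ (1 - (d:ℝ)/2) := by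
    rw [← Real.mul_rpow (by positivity) (le_of_lt ha)]
    congr 1; field_simp
  have h2 : (2*t) ^ (1 - (d:ℝ)/2) / (2*t) = (2*t) ^ (-(d:ℝ)/2) := by
    rw [show (1 - (d:ℝ)/2) = -(d:ℝ)/2 + 1 by ring, Real.rpow_add_one (ne_of_gt h2t)]
    field_simp
  calc Real.exp (-(t + a^2/(4*t))) * (2*t/a) ^ (1 - (d:ℝ)/2) / (2*t) * a ^ (1 - (d:ℝ)/2)
      = Real.exp (-(t + a^2/(4*t))) * ((2*t/a) ^ (1 - (d:ℝ)/2) * a ^ (1 - (d:ℝ)/2)) / (2*t) := by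
        ring
    _ = Real.exp (-(t + a^2/(4*t))) * ((2*t) ^ (1 - (d:ℝ)/2) / (2*t)) := by rw [h1]; ring
    _ = _ := by rw [h2]

lemma gauss_ft (d : ℕ) {t : ℝ} (ht : 0 < t) (ξ : EuclideanSpace ℝ (Fin d)) :
    (∫ x : EuclideanSpace ℝ (Fin d), Complex.exp (-(Complex.I * (⟪x, ξ⟫ : ℝ))) *
      Complex.exp (-((‖x‖^2/(4*t) : ℝ) : ℂ)))
      = (((4*π*t) ^ ((d:ℝ)/2) : ℝ) : ℂ) * Complex.exp (-((t * ‖ξ‖^2 : ℝ) : ℂ)) := by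
  have hb : (0:ℝ) < (((1/(4*t) : ℝ)):ℂ).re := by simp; positivity
  have ht4 : (0:ℝ) ≤ 4*π*t := by positivity
  have key := GaussianFourier.integral_cexp_neg_mul_sq_norm_add (V := EuclideanSpace ℝ (Fin d))
    hb (-Complex.I) ξ
  simp only [finrank_euclideanSpace_fin] at key
  have hL : ∀ x : EuclideanSpace ℝ (Fin d),
      Complex.exp (-(Complex.I * ((⟪x, ξ⟫ : ℝ) : ℂ))) * Complex.exp (-((‖x‖^2/(4*t) : ℝ) : ℂ))
        = Complex.exp (-(((1/(4*t):ℝ)):ℂ) * (‖x‖:ℂ)^2 + -Complex.I * ((⟪ξ, x⟫ : ℝ):ℂ)) := by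
    intro x
    rw [← Complex.exp_add, real_inner_comm ξ x]
    congr 1
    have h4t : ((4*t:ℝ):ℂ) ≠ 0 := by
      simp only [ne_eq, Complex.ofReal_eq_zero]; positivity
    push_cast
    field_simp
    ring
  rw [integral_congr_ae (Filter.Eventually.of_forall hL), key]
  congr 1
  · rw [show ((π:ℂ)/((1/(4*t):ℝ):ℂ)) = ((4*π*t:ℝ):ℂ) by
      have : ((4*t:ℝ):ℂ) ≠ 0 := by simp only [ne_eq, Complex.ofReal_eq_zero]; positivity
      push_cast at this ⊢
      field_simp]
    rw [Complex.ofReal_cpow ht4]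
    push_cast
    ring_nf
  · congr 1
    have ht0 : ((1/(4*t):ℝ):ℂ) ≠ 0 := by
      simp only [ne_eq, Complex.ofReal_eq_zero]; positivity
    rw [neg_sq, Complex.I_sq]
    push_cast
    field_simp

lemma gauss_int (d : ℕ) {t : ℝ} (ht : 0 < t) :
    (∫ x : EuclideanSpace ℝ (Fin d), Real.exp (-(‖x‖^2/(4*t)))) = (4*π*t) ^ ((d:ℝ)/2) := by
  have hb : (0:ℝ) < 1/(4*t) := by positivity
  have key := GaussianFourier.integral_rexp_neg_mul_sq_norm (V := EuclideanSpace ℝ (Fin d)) hb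
  simp only [finrank_euclideanSpace_fin] at key
  rw [show (fun x : EuclideanSpace ℝ (Fin d) => Real.exp (-(‖x‖^2/(4*t)))) =
    (fun x : EuclideanSpace ℝ (Fin d) => Real.exp (-(1/(4*t)) * ‖x‖^2)) from funext fun x => by ring_nf]
  rw [key, show π/(1/(4*t)) = 4*π*t by
    rw [div_div_eq_mul_div, div_one]
    ring]

lemma integral_exp_neg_mul_Ioi' {c : ℝ} (hc : 0 < c) :
    ∫ t in Ioi (0:ℝ), Real.exp (-(c*t)) = c⁻¹ := by
  have := integral_comp_mul_left_Ioi (fun u => Real.exp (-u)) 0 hc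
  simp only [mul_zero, integral_exp_neg_Ioi_zero, smul_eq_mul, mul_one] at this
  exact this

lemma rpow_cancel (d : ℕ) {t : ℝ} (ht : 0 < t) :
    (2*t) ^ (-(d:ℝ)/2) * (4*π*t) ^ ((d:ℝ)/2) = (2*π) ^ ((d:ℝ)/2) := by
  have h2t : (0:ℝ) < 2*t := by linarith
  have h1 : (4*π*t : ℝ) = (2*π) * (2*t) := by ring
  rw [h1, Real.mul_rpow (by positivity) (le_of_lt h2t), show -(d:ℝ)/2 = -((d:ℝ)/2) by ring,
    Real.rpow_neg (le_of_lt h2t)]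
  have : ((2*t) ^ ((d:ℝ)/2)) ≠ 0 := by positivity
  field_simp

/-- For `d ≥ 1`, the function `x ↦ K_{d/2-1}(|x|) |x|^{1-d/2}` is integrable on `ℝ^d`, its
Fourier transform at `ξ` equals `(2π)^{d/2}/(1+|ξ|²)`; in particular the interaction potential
`φ(x) = (2π)^{-d/2} K_{d/2-1}(|x|) |x|^{1-d/2}` has Fourier transform `1/(1+|ξ|²)` and
total integral `1`. -/
theorem besselK_fourier_transform (d : ℕ) (hd : 1 ≤ d) :
    Integrable (fun x : EuclideanSpace ℝ (Fin d) =>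
        besselK ((d : ℝ) / 2 - 1) ‖x‖ * ‖x‖ ^ (1 - (d : ℝ) / 2)) volume ∧
    (∀ ξ : EuclideanSpace ℝ (Fin d),
      (∫ x : EuclideanSpace ℝ (Fin d),
          Complex.exp (-(Complex.I * (⟪x, ξ⟫ : ℝ))) *
            ((besselK ((d : ℝ) / 2 - 1) ‖x‖ * ‖x‖ ^ (1 - (d : ℝ) / 2) : ℝ) : ℂ))
        = (((2 * Real.pi) ^ ((d : ℝ) / 2) / (1 + ‖ξ‖ ^ 2) : ℝ) : ℂ)) ∧
    (∀ ξ : EuclideanSpace ℝ (Fin d),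
      (∫ x : EuclideanSpace ℝ (Fin d),
          Complex.exp (-(Complex.I * (⟪x, ξ⟫ : ℝ))) *
            (((2 * Real.pi) ^ (-(d : ℝ) / 2) *
              (besselK ((d : ℝ) / 2 - 1) ‖x‖ * ‖x‖ ^ (1 - (d : ℝ) / 2)) : ℝ) : ℂ))
        = ((1 / (1 + ‖ξ‖ ^ 2) : ℝ) : ℂ)) ∧
    (∫ x : EuclideanSpace ℝ (Fin d),
        (2 * Real.pi) ^ (-(d : ℝ) / 2) *
          (besselK ((d : ℝ) / 2 - 1) ‖x‖ * ‖x‖ ^ (1 - (d : ℝ) / 2))) = 1 := by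
  set E := EuclideanSpace ℝ (Fin d) with hE
  set g : ℝ × E → ℝ :=
    fun p => Real.exp (-(p.1 + ‖p.2‖^2/(4*p.1))) * (2*p.1) ^ (-(d:ℝ)/2) with hg
  set μ : Measure (ℝ × E) := (volume.restrict (Ioi (0:ℝ))).prod volume with hμ
  haveI : Nonempty (Fin d) := ⟨⟨0, hd⟩⟩
  haveI : Nontrivial E := by
    refine nontrivial_of_ne (EuclideanSpace.single ⟨0, hd⟩ (1:ℝ)) 0 fun h => ?_
    have h1 : ‖EuclideanSpace.single (⟨0, hd⟩ : Fin d) (1:ℝ)‖ = 1 := by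
      rw [EuclideanSpace.norm_single]; norm_num
    rw [h, norm_zero] at h1
    norm_num at h1
  have hae0 : ∀ᵐ x : E ∂(volume : Measure E), x ≠ 0 := by
    have h0 : (volume : Measure E) {(0:E)} = 0 := measure_singleton 0
    refine ae_iff.2 ?_
    simpa [Set.setOf_eq_eq_singleton] using h0
  -- nonnegativity on the relevant region
  have hg0 : ∀ p : ℝ × E, 0 < p.1 → 0 ≤ g p := fun p hp =>
    mul_nonneg (le_of_lt (Real.exp_pos _)) (Real.rpow_nonneg (by linarith) _)
  -- measurability
  have hgm : AEStronglyMeasurable g μ := by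
    have hset : MeasurableSet ((Ioi (0:ℝ)) ×ˢ (univ : Set E)) :=
      measurableSet_Ioi.prod MeasurableSet.univ
    have hcont : ContinuousOn g ((Ioi (0:ℝ)) ×ˢ (univ : Set E)) := by
      apply ContinuousOn.mul
      · apply Real.continuous_exp.comp_continuousOn
        apply ContinuousOn.neg
        apply ContinuousOn.add continuousOn_fst
        apply ContinuousOn.div (by fun_prop) (by fun_prop)
        intro p hp
        have : (0:ℝ) < p.1 := hp.1
        positivity
      · apply ContinuousOn.rpow_const (by fun_prop)
        intro p hp
        exact Or.inl (by have : (0:ℝ) < p.1 := hp.1; positivity)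
    have : μ = ((volume : Measure ℝ).prod (volume : Measure E)).restrict
        ((Ioi (0:ℝ)) ×ˢ (univ : Set E)) := by
      rw [hμ, ← Measure.prod_restrict, Measure.restrict_univ]
    rw [this]
    exact hcont.aestronglyMeasurable hset
  -- fiberwise integrability and value
  have hfib : ∀ t : ℝ, 0 < t → Integrable (fun x : E => g (t, x)) volume := by
    intro t ht
    have hb : (0:ℝ) < (((1/(4*t):ℝ)):ℂ).re := by simp; positivity
    have h1 := (GaussianFourier.integrable_cexp_neg_mul_sq_norm_add (V := E) hb 0 0).re
    have h2 : Integrable (fun x : E => Real.exp (-(‖x‖^2/(4*t)))) volume := by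
      refine h1.congr (Filter.Eventually.of_forall fun x => ?_)
      have : (-(((1/(4*t):ℝ)):ℂ) * (‖x‖:ℂ)^2 + 0 * ((⟪(0:E), x⟫ : ℝ):ℂ))
          = ((-(‖x‖^2/(4*t)) : ℝ) : ℂ) := by push_cast; field_simp; simp
      simp only [this, ← Complex.ofReal_exp]
      exact Complex.ofReal_re _
    have := (h2.const_mul (Real.exp (-t) * (2*t) ^ (-(d:ℝ)/2)))
    refine this.congr (Filter.Eventually.of_forall fun x => ?_)
    simp only [hg]
    rw [show -(t + ‖x‖^2/(4*t)) = -t + -(‖x‖^2/(4*t)) by ring, Real.exp_add]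
    ring
  have hval : ∀ t : ℝ, 0 < t →
      (∫ x : E, g (t, x)) = (2*π) ^ ((d:ℝ)/2) * Real.exp (-t) := by
    intro t ht
    have h2 : (∫ x : E, g (t, x))
        = (Real.exp (-t) * (2*t) ^ (-(d:ℝ)/2)) * ∫ x : E, Real.exp (-(‖x‖^2/(4*t))) := by
      rw [← integral_const_mul]
      congr 1; funext x
      simp only [hg]
      rw [show -(t + ‖x‖^2/(4*t)) = -t + -(‖x‖^2/(4*t)) by ring, Real.exp_add]
      ring
    rw [h2, gauss_int d ht]
    rw [show Real.exp (-t) * (2*t) ^ (-(d:ℝ)/2) * (4*π*t) ^ ((d:ℝ)/2)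
        = (2*t) ^ (-(d:ℝ)/2) * (4*π*t) ^ ((d:ℝ)/2) * Real.exp (-t) by ring,
      rpow_cancel d ht]
  -- product integrability
  have hprod : Integrable g μ := by
    rw [hμ]
    refine (integrable_prod_iff hgm).2 ⟨?_, ?_⟩
    · exact (ae_restrict_mem measurableSet_Ioi).mono fun t ht => hfib t ht
    · have hexp : Integrable (fun t : ℝ => (2*π) ^ ((d:ℝ)/2) * Real.exp (-t))
          (volume.restrict (Ioi (0:ℝ))) := by
        refine Integrable.const_mul ?_ _
        have := exp_neg_integrableOn_Ioi 0 (one_pos)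
        have h' : IntegrableOn (fun x : ℝ => Real.exp (-x)) (Ioi 0) volume := by simpa using this
        exact h'
      refine hexp.congr ?_
      refine (ae_restrict_mem measurableSet_Ioi).mono fun t ht => ?_
      show (2*π) ^ ((d:ℝ)/2) * Real.exp (-t) = ∫ x : E, ‖g (t, x)‖
      rw [show (∫ x : E, ‖g (t, x)‖) = ∫ x : E, g (t, x) from
        integral_congr_ae (Filter.Eventually.of_forall fun x =>
          norm_of_nonneg (hg0 (t, x) ht)), hval t ht]
  have hμr : μ = ((volume : Measure ℝ).prod (volume : Measure E)).restrict
      ((Ioi (0:ℝ)) ×ˢ (univ : Set E)) := by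
    rw [hμ, ← Measure.prod_restrict, Measure.restrict_univ]
  -- statement 1
  have hint1 : Integrable (fun x : E => ∫ t in Ioi (0:ℝ), g (t, x)) volume :=
    hprod.integral_prod_right
  have hcong1 : (fun x : E => ∫ t in Ioi (0:ℝ), g (t, x))
      =ᵐ[(volume : Measure E)] (fun x : E =>
        besselK ((d:ℝ)/2 - 1) ‖x‖ * ‖x‖ ^ (1 - (d:ℝ)/2)) := by
    filter_upwards [hae0] with x hx
    rw [key_rep d ‖x‖ (norm_pos_iff.2 hx)]
  have st1 : Integrable (fun x : E =>
      besselK ((d:ℝ)/2 - 1) ‖x‖ * ‖x‖ ^ (1 - (d:ℝ)/2)) volume := hint1.congr hcong1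
  -- statement 2
  have st2 : ∀ ξ : E, (∫ x : E, Complex.exp (-(Complex.I * (⟪x, ξ⟫ : ℝ))) *
      ((besselK ((d:ℝ)/2 - 1) ‖x‖ * ‖x‖ ^ (1 - (d:ℝ)/2) : ℝ) : ℂ))
      = (((2*π) ^ ((d:ℝ)/2) / (1 + ‖ξ‖^2) : ℝ) : ℂ) := by
    intro ξ
    set Fc : ℝ × E → ℂ :=
      fun p => Complex.exp (-(Complex.I * (⟪p.2, ξ⟫ : ℝ))) * ((g p : ℝ) : ℂ) with hFc
    have hFm : AEStronglyMeasurable Fc μ := by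
      apply AEStronglyMeasurable.mul
      · have hc1 : Continuous fun p : ℝ × E => (⟪p.2, ξ⟫ : ℝ) :=
          continuous_snd.inner continuous_const
        exact (Complex.continuous_exp.comp
          ((continuous_const.mul (Complex.continuous_ofReal.comp hc1)).neg)).aestronglyMeasurable
      · exact Complex.continuous_ofReal.comp_aestronglyMeasurable hgm
    have hbound : ∀ᵐ p ∂μ, ‖Fc p‖ ≤ g p := by
      rw [hμr]
      filter_upwards [ae_restrict_mem (measurableSet_Ioi.prod MeasurableSet.univ)] with p hp
      have hp1 : 0 < p.1 := hp.1
      simp only [hFc]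
      rw [norm_mul, Complex.norm_exp]
      simp only [Complex.norm_real, Real.norm_eq_abs]
      rw [show (-(Complex.I * ((⟪p.2, ξ⟫ : ℝ) : ℂ))).re = 0 by simp, Real.exp_zero, one_mul,
        abs_of_nonneg (hg0 p hp1)]
    have hFi : Integrable Fc μ := hprod.mono' hFm hbound
    have swap := integral_integral_swap (f := fun t (x : E) => Fc (t, x))
      (μ := volume.restrict (Ioi (0:ℝ))) (ν := (volume : Measure E)) hFi
    have hstep1 : (∫ x : E, Complex.exp (-(Complex.I * (⟪x, ξ⟫ : ℝ))) *
        ((besselK ((d:ℝ)/2 - 1) ‖x‖ * ‖x‖ ^ (1 - (d:ℝ)/2) : ℝ) : ℂ))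
        = ∫ x : E, ∫ t in Ioi (0:ℝ), Fc (t, x) := by
      refine integral_congr_ae ?_
      filter_upwards [hae0] with x hx
      rw [key_rep d ‖x‖ (norm_pos_iff.2 hx)]
      have hcast : (((∫ t in Ioi (0:ℝ), Real.exp (-(t + ‖x‖^2/(4*t))) * (2*t) ^ (-(d:ℝ)/2)) : ℝ) : ℂ)
          = ∫ t in Ioi (0:ℝ),
            ((Real.exp (-(t + ‖x‖^2/(4*t))) * (2*t) ^ (-(d:ℝ)/2) : ℝ) : ℂ) :=
        integral_ofReal.symm
      rw [hcast, ← integral_const_mul]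
    have hinner : ∀ t ∈ Ioi (0:ℝ), (∫ x : E, Fc (t, x))
        = ((((2*π) ^ ((d:ℝ)/2) * Real.exp (-((1 + ‖ξ‖^2)*t)) : ℝ)) : ℂ) := by
      intro t ht
      have ht' : (0:ℝ) < t := ht
      have hptw : ∀ x : E, Fc (t, x)
          = ((((2*t) ^ (-(d:ℝ)/2) * Real.exp (-t) : ℝ)) : ℂ) *
            (Complex.exp (-(Complex.I * (⟪x, ξ⟫ : ℝ))) *
              Complex.exp (-((‖x‖^2/(4*t) : ℝ) : ℂ))) := by
        intro x
        simp only [hFc, hg]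
        rw [show -(t + ‖x‖^2/(4*t)) = -t + -(‖x‖^2/(4*t)) by ring, Real.exp_add]
        rw [Complex.ofReal_mul, Complex.ofReal_mul, Complex.ofReal_mul,
          Complex.ofReal_exp, Complex.ofReal_exp, Complex.ofReal_neg, Complex.ofReal_neg]
        ring
      rw [integral_congr_ae (Filter.Eventually.of_forall hptw), integral_const_mul,
        gauss_ft d ht' ξ]
      rw [show (-((t * ‖ξ‖^2 : ℝ) : ℂ)) = ((-(t * ‖ξ‖^2) : ℝ) : ℂ) by push_cast; ring,
        ← Complex.ofReal_exp, ← Complex.ofReal_mul, ← Complex.ofReal_mul]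
      congr 1
      rw [show (2*t) ^ (-(d:ℝ)/2) * Real.exp (-t) * ((4*π*t) ^ ((d:ℝ)/2) * Real.exp (-(t*‖ξ‖^2)))
          = (2*t) ^ (-(d:ℝ)/2) * (4*π*t) ^ ((d:ℝ)/2) * (Real.exp (-t) * Real.exp (-(t*‖ξ‖^2)))
          by ring, rpow_cancel d ht', ← Real.exp_add]
      congr 1
      ring
    have houter : (∫ t in Ioi (0:ℝ), ∫ x : E, Fc (t, x))
        = (((2*π) ^ ((d:ℝ)/2) / (1 + ‖ξ‖^2) : ℝ) : ℂ) := by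
      rw [setIntegral_congr_fun measurableSet_Ioi hinner]
      have hcast : (∫ t in Ioi (0:ℝ),
          (((2*π) ^ ((d:ℝ)/2) * Real.exp (-((1 + ‖ξ‖^2)*t)) : ℝ) : ℂ))
          = (((∫ t in Ioi (0:ℝ), (2*π) ^ ((d:ℝ)/2) * Real.exp (-((1 + ‖ξ‖^2)*t))) : ℝ) : ℂ) :=
        integral_ofReal
      rw [hcast]
      have hc : (0:ℝ) < 1 + ‖ξ‖^2 := by positivity
      rw [integral_const_mul, integral_exp_neg_mul_Ioi' hc]
      exact congrArg Complex.ofReal (div_eq_mul_inv _ _).symm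
    rw [hstep1, ← swap, houter]
  -- statement 3
  have st3 : ∀ ξ : E, (∫ x : E, Complex.exp (-(Complex.I * (⟪x, ξ⟫ : ℝ))) *
      (((2*π) ^ (-(d:ℝ)/2) *
        (besselK ((d:ℝ)/2 - 1) ‖x‖ * ‖x‖ ^ (1 - (d:ℝ)/2)) : ℝ) : ℂ))
      = ((1 / (1 + ‖ξ‖^2) : ℝ) : ℂ) := by
    intro ξ
    have hptw : ∀ x : E, Complex.exp (-(Complex.I * (⟪x, ξ⟫ : ℝ))) *
        (((2*π) ^ (-(d:ℝ)/2) *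
          (besselK ((d:ℝ)/2 - 1) ‖x‖ * ‖x‖ ^ (1 - (d:ℝ)/2)) : ℝ) : ℂ)
        = (((2*π) ^ (-(d:ℝ)/2) : ℝ) : ℂ) *
          (Complex.exp (-(Complex.I * (⟪x, ξ⟫ : ℝ))) *
            ((besselK ((d:ℝ)/2 - 1) ‖x‖ * ‖x‖ ^ (1 - (d:ℝ)/2) : ℝ) : ℂ)) := by
      intro x
      push_cast
      ring
    rw [integral_congr_ae (Filter.Eventually.of_forall hptw), integral_const_mul, st2 ξ,
      ← Complex.ofReal_mul]
    congr 1
    rw [mul_div_assoc', ← Real.rpow_add (by positivity),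
      show -(d:ℝ)/2 + (d:ℝ)/2 = (0:ℝ) by ring, Real.rpow_zero]
  -- statement 4
  have st4 : (∫ x : E, (2*π) ^ (-(d:ℝ)/2) *
      (besselK ((d:ℝ)/2 - 1) ‖x‖ * ‖x‖ ^ (1 - (d:ℝ)/2))) = 1 := by
    have h3 := st3 0
    have e1 : ∀ x : E, Complex.exp (-(Complex.I * ((⟪x, (0:E)⟫ : ℝ) : ℂ))) *
        (((2*π) ^ (-(d:ℝ)/2) * (besselK ((d:ℝ)/2-1) ‖x‖ * ‖x‖ ^ (1-(d:ℝ)/2)) : ℝ) : ℂ)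
        = (((2*π) ^ (-(d:ℝ)/2) * (besselK ((d:ℝ)/2-1) ‖x‖ * ‖x‖ ^ (1-(d:ℝ)/2)) : ℝ) : ℂ) := by
      intro x
      rw [inner_zero_right]
      norm_num
    rw [integral_congr_ae (Filter.Eventually.of_forall e1)] at h3
    have hcast : (∫ x : E, (((2*π) ^ (-(d:ℝ)/2) *
        (besselK ((d:ℝ)/2-1) ‖x‖ * ‖x‖ ^ (1-(d:ℝ)/2)) : ℝ) : ℂ))
        = (((∫ x : E, (2*π) ^ (-(d:ℝ)/2) *
          (besselK ((d:ℝ)/2-1) ‖x‖ * ‖x‖ ^ (1-(d:ℝ)/2))) : ℝ) : ℂ) := integral_ofReal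
    rw [hcast] at h3
    have h5 : ((1 / (1 + ‖(0:E)‖^2) : ℝ) : ℂ) = ((1:ℝ) : ℂ) := by
      rw [norm_zero]
      norm_num
    rw [h5] at h3
    exact_mod_cast h3
  exact ⟨st1, st2, st3, st4⟩
end

section
/- Let d ≥ 2 be an integer. The function x ↦ (1 + |x| + |x|²) · K_{d/2−1}(|x|) · |x|^{1−d/2} is integrable on ℝ^d; in particular the interaction potential φ(x) = (2π)^{−d/2} · K_{d/2−1}(|x|) · |x|^{1−d/2} satisfies the admissibility condition that (|·| + |·|²)·φ(·) ∈ L¹(ℝ^d). -/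
open MeasureTheory

section Aux

open Set Real Filter

lemma exp_neg_le_rpow {a u : ℝ} (ha : 0 < a) (hu : 0 < u) :
    Real.exp (-u) ≤ a ^ a * u ^ (-a) := by
  rw [Real.rpow_def_of_pos ha, Real.rpow_def_of_pos hu, ← Real.exp_add, Real.exp_le_exp]
  have h := Real.log_le_sub_one_of_pos (show 0 < u / a by positivity)
  rw [Real.log_div hu.ne' ha.ne'] at h
  have h2 : a * (Real.log u - Real.log a) ≤ a * (u / a - 1) :=
    mul_le_mul_of_nonneg_left h ha.le
  have h3 : a * (u / a - 1) = u - a := by field_simp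
  nlinarith

lemma cosh_lower {t : ℝ} (ht : 0 ≤ t) : 1/2 + Real.exp t / 4 ≤ Real.cosh t := by
  rw [Real.cosh_eq]
  have h1 : 1 ≤ Real.exp t := Real.one_le_exp ht
  have h3 : Real.exp t * (Real.exp t)⁻¹ = 1 := mul_inv_cancel₀ (Real.exp_pos t).ne'
  rw [Real.exp_neg t]
  nlinarith [Real.exp_pos t, inv_pos.mpr (Real.exp_pos t), sq_nonneg (Real.exp t - 1)]

lemma cosh_le_exp_self {u : ℝ} (hu : 0 ≤ u) : Real.cosh u ≤ Real.exp u := by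
  rw [Real.cosh_eq]
  have : Real.exp (-u) ≤ Real.exp u := Real.exp_le_exp.mpr (by linarith)
  linarith

lemma besselK_nonneg (ν x : ℝ) : 0 ≤ besselK ν x :=
  setIntegral_nonneg measurableSet_Ioi fun t _ => by positivity

lemma besselK_le {ν x : ℝ} (hν : 0 ≤ ν) (hx : 0 < x) :
    besselK ν x ≤ ((∫ t in Ioi (0:ℝ), Real.exp (-(1/2) * t)) *
        ((ν + 1/2) ^ (ν + 1/2) * 4 ^ (ν + 1/2))) *
      (Real.exp (-x/2) * x ^ (-(ν + 1/2))) := by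
  set a : ℝ := ν + 1/2 with ha
  have ha0 : (0:ℝ) < a := by positivity
  set K : ℝ := (a ^ a * 4 ^ a) * (Real.exp (-x/2) * x ^ (-a)) with hK
  have key : ∀ t ∈ Ioi (0:ℝ), Real.exp (-x * Real.cosh t) * Real.cosh (ν * t)
      ≤ K * Real.exp (-(1/2) * t) := by
    intro t ht
    have ht0 : (0:ℝ) ≤ t := (le_of_lt ht)
    have h1 : Real.cosh (ν * t) ≤ Real.exp (ν * t) :=
      cosh_le_exp_self (by positivity)
    have h2 : Real.exp (-x * Real.cosh t)
        ≤ Real.exp (-x/2) * Real.exp (-(x/4 * Real.exp t)) := by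
      rw [← Real.exp_add, Real.exp_le_exp]
      have := cosh_lower ht0
      nlinarith
    have h3 : Real.exp (-(x/4 * Real.exp t)) ≤ a ^ a * (x/4 * Real.exp t) ^ (-a) :=
      exp_neg_le_rpow ha0 (by positivity)
    have h4 : (x/4 * Real.exp t) ^ (-a) = (x ^ (-a) * 4 ^ a) * Real.exp (-(a * t)) := by
      rw [Real.mul_rpow (by positivity) (Real.exp_pos t).le]
      rw [div_eq_mul_inv, Real.mul_rpow hx.le (by norm_num)]
      rw [← Real.exp_log (Real.exp_pos t), Real.log_exp]
      rw [← Real.exp_mul]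
      rw [Real.inv_rpow (by norm_num), ← Real.rpow_neg (by norm_num), neg_neg]
      ring_nf
    have h5 : Real.exp (-(a * t)) * Real.exp (ν * t) = Real.exp (-(1/2) * t) := by
      rw [← Real.exp_add]; congr 1; rw [ha]; ring
    calc Real.exp (-x * Real.cosh t) * Real.cosh (ν * t)
        ≤ (Real.exp (-x/2) * Real.exp (-(x/4 * Real.exp t))) * Real.exp (ν * t) := by
          apply mul_le_mul h2 h1 (Real.cosh_pos _).le (by positivity)
      _ ≤ (Real.exp (-x/2) * (a ^ a * ((x ^ (-a) * 4 ^ a) * Real.exp (-(a * t)))))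
            * Real.exp (ν * t) := by
          rw [← h4]
          apply mul_le_mul_of_nonneg_right _ (Real.exp_pos _).le
          exact mul_le_mul_of_nonneg_left h3 (Real.exp_pos _).le
      _ = K * (Real.exp (-(a * t)) * Real.exp (ν * t)) := by rw [hK]; ring
      _ = K * Real.exp (-(1/2) * t) := by rw [h5]
  have hInt : IntegrableOn (fun t : ℝ => K * Real.exp (-(1/2) * t)) (Ioi (0:ℝ)) :=
    (exp_neg_integrableOn_Ioi 0 (by norm_num : (0:ℝ) < 1/2)).const_mul K
  have hb : besselK ν x ≤ ∫ t in Ioi (0:ℝ), K * Real.exp (-(1/2) * t) := by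
    apply integral_mono_of_nonneg
    · filter_upwards with t using by positivity
    · exact hInt
    · filter_upwards [ae_restrict_mem measurableSet_Ioi] with t ht using key t ht
  have hci : (∫ t in Ioi (0:ℝ), K * Real.exp (-(1/2) * t))
      = K * ∫ t in Ioi (0:ℝ), Real.exp (-(1/2) * t) := by
    simpa using integral_smul (μ := volume.restrict (Ioi (0:ℝ))) K
      (fun t => Real.exp (-(1/2) * t))
  rw [hci] at hb
  calc besselK ν x ≤ K * ∫ t in Ioi (0:ℝ), Real.exp (-(1/2) * t) := hb
    _ = _ := by rw [hK]; ring

lemma integrable_of_integrableOn_norm {d : ℕ} (hd : 1 ≤ d) {f : ℝ → ℝ}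
    (h : IntegrableOn (fun y : ℝ => y ^ (d - 1) * f y) (Set.Ioi 0) volume) :
    Integrable (fun x : EuclideanSpace ℝ (Fin d) => f ‖x‖) volume := by
  set E := EuclideanSpace ℝ (Fin d) with hE
  have hdim : Module.finrank ℝ E = d := finrank_euclideanSpace_fin
  have hnt : Nontrivial E := Module.nontrivial_of_finrank_pos
    (by omega : 0 < Module.finrank ℝ E)
  have hembI : MeasurableEmbedding (Subtype.val : (Set.Ioi (0:ℝ)) → ℝ) :=
    MeasurableEmbedding.subtype_coe measurableSet_Ioi
  have h1 : Integrable (fun y : Set.Ioi (0:ℝ) => (y:ℝ) ^ (d - 1) * f y)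
      (Measure.comap Subtype.val volume) := by
    have := hembI.integrable_map_iff (g := fun y : ℝ => y ^ (d - 1) * f y)
      (μ := Measure.comap Subtype.val volume)
    rw [map_comap_subtype_coe measurableSet_Ioi] at this
    exact this.mp h
  have h2 : Integrable (fun y : Set.Ioi (0:ℝ) => f y) (Measure.volumeIoiPow (d - 1)) := by
    rw [Measure.volumeIoiPow, integrable_withDensity_iff
      ((measurable_subtype_coe.pow_const _).ennreal_ofReal)
      (Eventually.of_forall fun y => ENNReal.ofReal_lt_top)]
    refine h1.congr (Eventually.of_forall fun y => ?_)
    show (y:ℝ) ^ (d - 1) * f y = f y * (ENNReal.ofReal ((y:ℝ) ^ (d - 1))).toReal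
    rw [ENNReal.toReal_ofReal (pow_nonneg (le_of_lt y.2) _)]
    ring
  have h3 : Integrable (fun p : (Metric.sphere (0:E) 1) × (Set.Ioi (0:ℝ)) => f p.2)
      ((volume : Measure E).toSphere.prod
        (Measure.volumeIoiPow (Module.finrank ℝ E - 1))) := by
    rw [hdim]
    simpa using (integrable_const (1:ℝ)).smul_prod h2
  have h4 : Integrable (fun x : ({(0:E)}ᶜ : Set E) => f ‖x.1‖)
      (Measure.comap Subtype.val (volume : Measure E)) := by
    have := ((Measure.measurePreserving_homeomorphUnitSphereProd
        (volume : Measure E)).integrable_comp_emb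
      (Homeomorph.measurableEmbedding _)).mpr h3
    refine this.congr (Eventually.of_forall fun x => ?_)
    simp [homeomorphUnitSphereProd_apply_snd_coe]
  have hembE : MeasurableEmbedding (Subtype.val : ({(0:E)}ᶜ : Set E) → E) :=
    MeasurableEmbedding.subtype_coe (measurableSet_singleton (0:E)).compl
  have h5 := hembE.integrable_map_iff (g := fun x : E => f ‖x‖)
      (μ := Measure.comap Subtype.val (volume : Measure E))
  rw [map_comap_subtype_coe (measurableSet_singleton (0:E)).compl,
    restrict_compl_singleton (μ := (volume : Measure E))] at h5
  exact h5.mpr h4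

end Aux

open Set Real Filter

/-- For `d ≥ 2`, `x ↦ (1+|x|+|x|²) K_{d/2-1}(|x|) |x|^{1-d/2}` is integrable on `ℝ^d`;
in particular the interaction potential `φ(x) = (2π)^{-d/2} K_{d/2-1}(|x|) |x|^{1-d/2}`
satisfies `(|·| + |·|²) φ ∈ L¹(ℝ^d)`. -/
theorem besselK_potential_admissible (d : ℕ) (hd : 2 ≤ d) :
    Integrable (fun x : EuclideanSpace ℝ (Fin d) =>
        (1 + ‖x‖ + ‖x‖ ^ 2) *
          (besselK ((d : ℝ) / 2 - 1) ‖x‖ * ‖x‖ ^ (1 - (d : ℝ) / 2))) volume ∧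
    Integrable (fun x : EuclideanSpace ℝ (Fin d) =>
        (‖x‖ + ‖x‖ ^ 2) *
          ((2 * Real.pi) ^ (-(d : ℝ) / 2) *
            (besselK ((d : ℝ) / 2 - 1) ‖x‖ * ‖x‖ ^ (1 - (d : ℝ) / 2)))) volume := by
  have hd2 : (2:ℝ) ≤ (d:ℝ) := by exact_mod_cast hd
  set ν : ℝ := (d:ℝ)/2 - 1 with hν
  have hν0 : 0 ≤ ν := by rw [hν]; linarith
  set C : ℝ := ((∫ t in Ioi (0:ℝ), Real.exp (-(1/2) * t)) *
      ((ν + 1/2) ^ (ν + 1/2) * 4 ^ (ν + 1/2))) with hC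
  have hC0 : 0 ≤ C := by
    apply mul_nonneg
    · exact setIntegral_nonneg measurableSet_Ioi fun t _ => (Real.exp_pos _).le
    · positivity
  set G : ℝ → ℝ := fun r =>
    C * ((1 + r + r ^ 2) * (Real.exp (-r/2) * r ^ ((3:ℝ)/2 - d))) with hG
  have hbound : ∀ r : ℝ, 0 < r →
      (1 + r + r ^ 2) * (besselK ν r * r ^ (1 - (d:ℝ)/2)) ≤ G r := by
    intro r hr
    have h1 : besselK ν r ≤ C * (Real.exp (-r/2) * r ^ (-(ν + 1/2))) :=
      besselK_le hν0 hr
    have h2 : besselK ν r * r ^ (1 - (d:ℝ)/2)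
        ≤ C * (Real.exp (-r/2) * r ^ ((3:ℝ)/2 - d)) := by
      calc besselK ν r * r ^ (1 - (d:ℝ)/2)
          ≤ (C * (Real.exp (-r/2) * r ^ (-(ν + 1/2)))) * r ^ (1 - (d:ℝ)/2) :=
            mul_le_mul_of_nonneg_right h1 (Real.rpow_nonneg hr.le _)
        _ = C * (Real.exp (-r/2) * (r ^ (-(ν + 1/2)) * r ^ (1 - (d:ℝ)/2))) := by ring
        _ = C * (Real.exp (-r/2) * r ^ ((3:ℝ)/2 - d)) := by
            rw [← Real.rpow_add hr]
            congr 2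
            rw [hν]; ring
    calc (1 + r + r ^ 2) * (besselK ν r * r ^ (1 - (d:ℝ)/2))
        ≤ (1 + r + r ^ 2) * (C * (Real.exp (-r/2) * r ^ ((3:ℝ)/2 - d))) :=
          mul_le_mul_of_nonneg_left h2 (by positivity)
      _ = G r := by rw [hG]; ring
  -- integrability of the dominating radial function
  have hGint : Integrable (fun x : EuclideanSpace ℝ (Fin d) => G ‖x‖) volume := by
    apply integrable_of_integrableOn_norm (by omega)
    have i : ∀ s : ℝ, (-1:ℝ) < s →
        IntegrableOn (fun y : ℝ => y ^ s * Real.exp (-(1/2) * y)) (Ioi (0:ℝ)) := by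
      intro s hs
      have := integrableOn_rpow_mul_exp_neg_mul_rpow hs zero_lt_one
        (by norm_num : (0:ℝ) < 1/2)
      simpa [Real.rpow_one] using this
    have hH : IntegrableOn (fun y : ℝ =>
        C * (y ^ ((1:ℝ)/2) * Real.exp (-(1/2) * y) + y ^ ((3:ℝ)/2) * Real.exp (-(1/2) * y)
          + y ^ ((5:ℝ)/2) * Real.exp (-(1/2) * y))) (Ioi (0:ℝ)) :=
      ((((i _ (by norm_num)).add (i _ (by norm_num))).add (i _ (by norm_num))).const_mul C)
    refine hH.congr_fun (fun y hy => ?_) measurableSet_Ioi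
    have hy0 : (0:ℝ) < y := hy
    have e1 : (y:ℝ) ^ (d - 1) = y ^ ((d:ℝ) - 1) := by
      rw [← Real.rpow_natCast y (d-1)]
      congr 1
      push_cast [Nat.cast_sub (by omega : 1 ≤ d)]
      ring
    have e2 : y ^ ((d:ℝ) - 1) * y ^ ((3:ℝ)/2 - d) = y ^ ((1:ℝ)/2) := by
      rw [← Real.rpow_add hy0]; congr 1; ring
    have e3 : y * y ^ ((1:ℝ)/2) = y ^ ((3:ℝ)/2) := by
      rw [show (3:ℝ)/2 = 1 + 1/2 by norm_num, Real.rpow_add hy0, Real.rpow_one]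
    have e4 : y ^ 2 * y ^ ((1:ℝ)/2) = y ^ ((5:ℝ)/2) := by
      rw [show (5:ℝ)/2 = 2 + 1/2 by norm_num, Real.rpow_add hy0]
      norm_num [Real.rpow_two]
    have eexp : Real.exp (-y/2) = Real.exp (-(1/2) * y) := by ring_nf
    show C * _ = y ^ (d-1) * G y
    rw [hG]
    simp only []
    rw [e1, eexp, ← e3, ← e4, ← e2]
    ring
  -- measurability
  have hsm : StronglyMeasurable (besselK ν) := by
    have hc : Continuous (fun p : ℝ × ℝ =>
        Real.exp (-p.1 * Real.cosh p.2) * Real.cosh (ν * p.2)) := by fun_prop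
    exact hc.stronglyMeasurable.integral_prod_right'
  have hmcore : Measurable (fun x : EuclideanSpace ℝ (Fin d) =>
      besselK ν ‖x‖ * ‖x‖ ^ (1 - (d:ℝ)/2)) := by
    apply Measurable.mul
    · exact hsm.measurable.comp measurable_norm
    · exact (by fun_prop : Measurable (fun x : EuclideanSpace ℝ (Fin d) => ‖x‖ ^ (1 - (d:ℝ)/2)))
  have hcore0 : ∀ x : EuclideanSpace ℝ (Fin d),
      0 ≤ besselK ν ‖x‖ * ‖x‖ ^ (1 - (d:ℝ)/2) :=
    fun x => mul_nonneg (besselK_nonneg _ _) (Real.rpow_nonneg (norm_nonneg _) _)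
  have hae : ∀ᵐ x : EuclideanSpace ℝ (Fin d) ∂volume, x ≠ 0 := by
    have hnt : Nontrivial (EuclideanSpace ℝ (Fin d)) :=
      Module.nontrivial_of_finrank_pos
        (by rw [finrank_euclideanSpace_fin]; omega : 0 < Module.finrank ℝ _)
    refine ae_iff.mpr ?_
    simpa using measure_singleton (0 : EuclideanSpace ℝ (Fin d))
  have h₁ : Integrable (fun x : EuclideanSpace ℝ (Fin d) =>
      (1 + ‖x‖ + ‖x‖ ^ 2) * (besselK ν ‖x‖ * ‖x‖ ^ (1 - (d:ℝ)/2))) volume := by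
    apply hGint.mono'
    · exact ((by fun_prop : Measurable (fun x : EuclideanSpace ℝ (Fin d) =>
        1 + ‖x‖ + ‖x‖ ^ 2)).mul hmcore).aestronglyMeasurable
    · filter_upwards [hae] with x hx
      have hr : 0 < ‖x‖ := norm_pos_iff.mpr hx
      rw [Real.norm_eq_abs, abs_of_nonneg (mul_nonneg (by positivity) (hcore0 x))]
      exact hbound ‖x‖ hr
  refine ⟨h₁, ?_⟩
  set c2 : ℝ := (2 * Real.pi) ^ (-(d:ℝ)/2) with hc2
  have hc2p : 0 ≤ c2 := Real.rpow_nonneg (by positivity) _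
  apply (h₁.const_mul c2).mono'
  · exact ((by fun_prop : Measurable (fun x : EuclideanSpace ℝ (Fin d) =>
      ‖x‖ + ‖x‖ ^ 2)).mul (measurable_const.mul hmcore)).aestronglyMeasurable
  · filter_upwards with x
    have ht := hcore0 x
    have hnn : 0 ≤ (‖x‖ + ‖x‖ ^ 2) * (c2 * (besselK ν ‖x‖ * ‖x‖ ^ (1 - (d:ℝ)/2))) := by
      apply mul_nonneg (by positivity) (mul_nonneg hc2p ht)
    rw [Real.norm_eq_abs, abs_of_nonneg hnn]
    have step : (‖x‖ + ‖x‖ ^ 2) * (besselK ν ‖x‖ * ‖x‖ ^ (1 - (d:ℝ)/2))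
        ≤ (1 + ‖x‖ + ‖x‖ ^ 2) * (besselK ν ‖x‖ * ‖x‖ ^ (1 - (d:ℝ)/2)) :=
      mul_le_mul_of_nonneg_right (by nlinarith [norm_nonneg x, sq_nonneg ‖x‖]) ht
    calc (‖x‖ + ‖x‖ ^ 2) * (c2 * (besselK ν ‖x‖ * ‖x‖ ^ (1 - (d:ℝ)/2)))
        = c2 * ((‖x‖ + ‖x‖ ^ 2) * (besselK ν ‖x‖ * ‖x‖ ^ (1 - (d:ℝ)/2))) := by ring
      _ ≤ c2 * ((1 + ‖x‖ + ‖x‖ ^ 2) * (besselK ν ‖x‖ * ‖x‖ ^ (1 - (d:ℝ)/2))) :=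
          mul_le_mul_of_nonneg_left step hc2p
end

section
/- Let p > 0, ν > 0, κ > 0, M = ν²/(4κ), β ∈ [0, 1), and for each α > 0 let x_{α,β} be the unique positive solution of g_α(x) = β. Then as α → ∞: (i) if M < 1/(1−β), then x_{α,β}/α² → 1/(M(1−β)) − 1; (ii) if M = 1/(1−β), then x_{α,β}/α → (2/ν)·√(p/(1−β)); (iii) if M > 1/(1−β), then x_{α,β} → (4p/ν²)·M/((1−β)M − 1). -/
open Filter

/-- The function `g_α` arising in the spectral analysis of the linearized order-parameter
system. -/
noncomputable def gfun (p ν κ α x : ℝ) : ℝ :=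
  1 - (4 / (ν ^ 2 * x)) * (p + κ * x / (x / α ^ 2 + 1))

set_option maxHeartbeats 1000000 in
/-- Asymptotics, as `α → ∞`, of the unique positive solution `x_{α,β}` of `g_α(x) = β`,
according to the position of `M = ν²/(4κ)` with respect to `1/(1-β)`. -/
theorem gfun_solution_asymptotics (p ν κ : ℝ) (hp : 0 < p) (hν : 0 < ν) (hκ : 0 < κ)
    (M : ℝ) (hM : M = ν ^ 2 / (4 * κ))
    (β : ℝ) (hβ : β ∈ Set.Ico (0:ℝ) 1)
    (X : ℝ → ℝ)
    (hX : ∀ α > 0, 0 < X α ∧ gfun p ν κ α (X α) = β) :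
    (M < 1 / (1 - β) →
      Tendsto (fun α => X α / α ^ 2) atTop (nhds (1 / (M * (1 - β)) - 1))) ∧
    (M = 1 / (1 - β) →
      Tendsto (fun α => X α / α) atTop (nhds ((2 / ν) * Real.sqrt (p / (1 - β))))) ∧
    (1 / (1 - β) < M →
      Tendsto X atTop (nhds ((4 * p / ν ^ 2) * (M / ((1 - β) * M - 1))))) := by
  obtain ⟨hβ0, hβ1⟩ := hβ
  set c := 1 - β with hcdef
  set A := 4 * p / ν ^ 2 with hAdef
  set d := c - 1 / M with hddef
  clear_value c A d
  have hc : 0 < c := by rw [hcdef]; linarith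
  have hA : 0 < A := by rw [hAdef]; positivity
  have hM0 : 0 < M := hM ▸ by positivity
  -- the quadratic satisfied by X α
  have hquad : ∀ α : ℝ, 0 < α →
      c * (X α)^2 + (d * α^2 - A) * (X α) - A * α^2 = 0 := by
    intro α hα
    obtain ⟨hx, heq⟩ := hX α hα
    set x := X α
    have hden : 0 < x / α ^ 2 + 1 := by positivity
    have heq' : gfun p ν κ α x = 1 - c := by rw [heq, hcdef]; ring
    unfold gfun at heq'
    field_simp [hx.ne', hν.ne', hα.ne', hden.ne'] at heq'
    rw [hddef, hAdef, hM]
    field_simp [hν.ne', hκ.ne']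
    nlinarith [heq']
  -- explicit root formula
  have key : ∀ α : ℝ, 0 < α →
      X α = α^2 * (Real.sqrt ((d - A/α^2)^2 + 4*c*A/α^2) - (d - A/α^2)) / (2*c) := by
    intro α hα
    obtain ⟨hx, -⟩ := hX α hα
    set x := X α
    set b := d - A/α^2 with hb
    set s := Real.sqrt (b^2 + 4*c*A/α^2) with hs
    have hpos : (0:ℝ) < 4*c*A/α^2 := by positivity
    have hDpos : (0:ℝ) < b^2 + 4*c*A/α^2 := by positivity
    have hs2 : s^2 = b^2 + 4*c*A/α^2 := Real.sq_sqrt hDpos.le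
    have habs : |b| < s := by
      rw [hs, ← Real.sqrt_sq_eq_abs]
      exact Real.sqrt_lt_sqrt (by positivity) (by linarith)
    clear_value s
    have hbα : b*α^2 = d*α^2 - A := by rw [hb]; field_simp
    have hquad' : c * x^2 + (b*α^2) * x - A*α^2 = 0 := by
      linear_combination hquad α hα + x * hbα
    have ht : (4*c*A/α^2) * α^2 = 4*c*A := by field_simp
    have hsq : (2*c*x + b*α^2)^2 = (α^2 * s)^2 := by
      linear_combination 4*c*hquad' - α^4*hs2 - α^2*ht
    rcases sq_eq_sq_iff_eq_or_eq_neg.mp hsq with h | h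
    · field_simp
      linarith [h]
    · exfalso
      have hbs : -s < b := neg_lt_of_abs_lt habs
      have h1 : 0 < (b + s) * α^2 := mul_pos (by linarith) (by positivity)
      nlinarith [mul_pos hc hx]
  -- building-block limits
  have htop : Tendsto (fun α : ℝ => α^2) atTop atTop := tendsto_pow_atTop two_ne_zero
  have hA0 : Tendsto (fun α : ℝ => A/α^2) atTop (nhds 0) :=
    tendsto_const_nhds.div_atTop htop
  have hcA0 : Tendsto (fun α : ℝ => 4*c*A/α^2) atTop (nhds 0) :=
    tendsto_const_nhds.div_atTop htop
  have hbf : Tendsto (fun α : ℝ => d - A/α^2) atTop (nhds d) := by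
    simpa using tendsto_const_nhds.sub hA0
  have hsf : Tendsto (fun α : ℝ => Real.sqrt ((d - A/α^2)^2 + 4*c*A/α^2)) atTop
      (nhds |d|) := by
    have h1 : Tendsto (fun α : ℝ => (d - A/α^2)^2 + 4*c*A/α^2) atTop (nhds (d^2)) := by
      simpa using (hbf.pow 2).add hcA0
    have := (Real.continuous_sqrt.tendsto (d^2)).comp h1
    simpa [Function.comp_def, Real.sqrt_sq_eq_abs] using this
  have hdiv2 : ∀ (y α : ℝ), α ≠ 0 → α^2 * y / (2*c) / α^2 = y / (2*c) := by
    intro y α hα; field_simp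
  refine ⟨?_, ?_, ?_⟩
  · -- case M < 1/c
    intro h
    have hMc : M * c < 1 := by
      have := (lt_div_iff₀ hc).mp h; linarith
    have hd : d < 0 := by
      rw [hddef, sub_neg, lt_div_iff₀ hM0]
      linarith [mul_comm M c]
    have hlim : Tendsto (fun α : ℝ =>
        (Real.sqrt ((d - A/α^2)^2 + 4*c*A/α^2) - (d - A/α^2)) / (2*c)) atTop
        (nhds ((|d| - d)/(2*c))) := (hsf.sub hbf).div_const (2*c)
    have hval : 1/(M*c) - 1 = (|d| - d)/(2*c) := by
      rw [abs_of_neg hd, hddef]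
      field_simp
      ring
    rw [hval]
    refine hlim.congr' ?_
    filter_upwards [eventually_gt_atTop (0:ℝ)] with α hα
    rw [key α hα, hdiv2 _ _ hα.ne']
  · -- case M = 1/c
    intro h
    have hMc : 1/M = c := by rw [h, one_div_one_div]
    have hd0 : d = 0 := by rw [hddef, hMc]; ring
    have heq : ∀ᶠ α in atTop, (Real.sqrt (A^2/α^2 + 4*c*A) + A/α)/(2*c) = X α / α := by
      filter_upwards [eventually_gt_atTop (0:ℝ)] with α hα
      rw [key α hα, hd0]
      have harg : (0 - A/α^2)^2 + 4*c*A/α^2 = (A^2/α^2 + 4*c*A)/α^2 := by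
        field_simp; ring
      rw [harg, Real.sqrt_div (by positivity) _, Real.sqrt_sq hα.le]
      set S := Real.sqrt (A^2/α^2 + 4*c*A) with hS
      clear_value S
      field_simp
      ring
    have hAα0 : Tendsto (fun α : ℝ => A/α) atTop (nhds 0) :=
      tendsto_const_nhds.div_atTop tendsto_id
    have h1 : Tendsto (fun α : ℝ => A^2/α^2 + 4*c*A) atTop (nhds (4*c*A)) := by
      have h0 : Tendsto (fun α : ℝ => A^2/α^2) atTop (nhds 0) :=
        tendsto_const_nhds.div_atTop htop
      simpa using h0.add (tendsto_const_nhds : Tendsto (fun _ : ℝ => 4*c*A) atTop (nhds (4*c*A)))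
    have h2 : Tendsto (fun α : ℝ => (Real.sqrt (A^2/α^2 + 4*c*A) + A/α)/(2*c)) atTop
        (nhds ((Real.sqrt (4*c*A) + 0)/(2*c))) :=
      (((Real.continuous_sqrt.tendsto (4*c*A)).comp h1).add hAα0).div_const (2*c)
    have hval : (2/ν) * Real.sqrt (p/c) = (Real.sqrt (4*c*A) + 0)/(2*c) := by
      rw [add_zero,
        show 4*c*A = ((2/ν) * Real.sqrt (p/c) * (2*c))^2 by
          rw [mul_pow, mul_pow, Real.sq_sqrt (div_pos hp hc).le, hAdef]
          field_simp
          ring,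
        Real.sqrt_sq (by positivity)]
      field_simp
    rw [hval]
    exact h2.congr' heq
  · -- case 1/c < M
    intro h
    have hMc : 1 < c * M := by
      have := (div_lt_iff₀ hc).mp h; linarith
    have hd : 0 < d := by
      rw [hddef, sub_pos, div_lt_iff₀ hM0]; linarith
    have h2d : Tendsto (fun α : ℝ =>
        (d - A/α^2) + Real.sqrt ((d - A/α^2)^2 + 4*c*A/α^2)) atTop (nhds (2*d)) := by
      have := hbf.add hsf
      rwa [abs_of_pos hd, ← two_mul] at this
    have hev : ∀ᶠ α in atTop, d < (d - A/α^2) + Real.sqrt ((d - A/α^2)^2 + 4*c*A/α^2) :=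
      h2d.eventually (eventually_gt_nhds (by linarith))
    have heq : ∀ᶠ α in atTop,
        2*A / ((d - A/α^2) + Real.sqrt ((d - A/α^2)^2 + 4*c*A/α^2)) = X α := by
      filter_upwards [eventually_gt_atTop (0:ℝ), hev] with α hα hsb
      rw [key α hα]
      set b := d - A/α^2 with hb
      set s := Real.sqrt (b^2 + 4*c*A/α^2) with hs
      have hDpos : (0:ℝ) < b^2 + 4*c*A/α^2 := by positivity
      have hs2 : s^2 = b^2 + 4*c*A/α^2 := Real.sq_sqrt hDpos.le
      clear_value s
      have hbs : (0:ℝ) < b + s := by linarith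
      have ht : (4*c*A/α^2) * α^2 = 4*c*A := by field_simp
      rw [div_eq_div_iff hbs.ne' (by positivity : (0:ℝ) < 2*c).ne']
      linear_combination (-(α^2))*hs2 - ht
    have hlim : Tendsto (fun α : ℝ =>
        2*A / ((d - A/α^2) + Real.sqrt ((d - A/α^2)^2 + 4*c*A/α^2))) atTop
        (nhds (2*A/(2*d))) := tendsto_const_nhds.div h2d (by positivity)
    have hval : A * (M / (c*M - 1)) = 2*A/(2*d) := by
      rw [hddef]
      have h1 : c*M - 1 ≠ 0 := by linarith
      field_simp
    rw [hval]
    exact hlim.congr' heq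
end

section
/- Let d ≥ 1 and let F : ℝ^d → ℝ^d be twice continuously differentiable. Assume there are constants L, K₂, m > 0 with ‖DF(y)‖ ≤ L and ‖D²F(y)‖ ≤ K₂ for all y ∈ ℝ^d, and |F(a) − F(b)| ≥ m·|a − b| for all a, b ∈ ℝ^d. Then for every x ∈ ℝ^d and every w ∈ ℝ^d with w ≠ 0, the ratios Y₋ = |F(x) − F(x − w)|/|w| and Y₊ = |F(x) − F(x + w)|/|w| satisfy |Y₋ − Y₊| ≤ (L·K₂/m)·|w|. -/
open Set

set_option maxHeartbeats 1000000
set_option synthInstance.maxHeartbeats 400000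

private lemma inner_add_sub_eq_norm_sq_sub {E : Type*} [NormedAddCommGroup E]
    [InnerProductSpace ℝ E] (u v : E) :
    (inner ℝ (u + v) (u - v) : ℝ) = ‖u‖^2 - ‖v‖^2 := by
  rw [inner_add_left, inner_sub_right, inner_sub_right, real_inner_self_eq_norm_sq,
    real_inner_self_eq_norm_sq, real_inner_comm v u]
  ring

/-- Key estimate on the variation ratios of a Lagrangian-type change of variable:
if `F` is `C²` with `‖DF‖ ≤ L`, `‖D²F‖ ≤ K₂` and `|F(a) - F(b)| ≥ m |a - b|`, then for
`w ≠ 0` the ratios `Y∓ = |F(x) - F(x ∓ w)|/|w|` satisfy `|Y₋ - Y₊| ≤ (L K₂ / m) |w|`. -/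
theorem variation_ratio_difference_bound (d : ℕ) (hd : 1 ≤ d)
    (F : EuclideanSpace ℝ (Fin d) → EuclideanSpace ℝ (Fin d))
    (hF : ContDiff ℝ 2 F)
    (L K₂ m : ℝ) (hL : 0 < L) (hK : 0 < K₂) (hm : 0 < m)
    (hDF : ∀ y, ‖fderiv ℝ F y‖ ≤ L)
    (hD2F : ∀ y, ‖iteratedFDeriv ℝ 2 F y‖ ≤ K₂)
    (hlow : ∀ a b, m * ‖a - b‖ ≤ ‖F a - F b‖)
    (x w : EuclideanSpace ℝ (Fin d)) (hw : w ≠ 0) :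
    |‖F x - F (x - w)‖ / ‖w‖ - ‖F x - F (x + w)‖ / ‖w‖| ≤ (L * K₂ / m) * ‖w‖ := by
  have hw' : (0:ℝ) < ‖w‖ := norm_pos_iff.mpr hw
  have hFd : Differentiable ℝ F := hF.differentiable two_ne_zero
  have hDF1 : ContDiff ℝ 1 (fderiv ℝ F) := hF.fderiv_right (by norm_num)
  have hDFd : Differentiable ℝ (fderiv ℝ F) := hDF1.differentiable one_ne_zero
  -- bound on the derivative of `fderiv F`
  have hD2 : ∀ y, ‖fderiv ℝ (fderiv ℝ F) y‖ ≤ K₂ := by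
    intro y
    have e0 : iteratedFDeriv ℝ 0 (fderiv ℝ F)
        = (continuousMultilinearCurryFin0 ℝ (EuclideanSpace ℝ (Fin d))
            (EuclideanSpace ℝ (Fin d) →L[ℝ] EuclideanSpace ℝ (Fin d))).symm ∘ fderiv ℝ F :=
      iteratedFDeriv_zero_eq_comp
    have e1 : ‖fderiv ℝ (iteratedFDeriv ℝ 0 (fderiv ℝ F)) y‖
        = ‖iteratedFDeriv ℝ (0+1) (fderiv ℝ F) y‖ := norm_fderiv_iteratedFDeriv
    have e2 : ‖iteratedFDeriv ℝ 1 (fderiv ℝ F) y‖ = ‖iteratedFDeriv ℝ (1+1) F y‖ :=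
      norm_iteratedFDeriv_fderiv
    have e3 : fderiv ℝ (iteratedFDeriv ℝ 0 (fderiv ℝ F)) y
        = ((continuousMultilinearCurryFin0 ℝ (EuclideanSpace ℝ (Fin d))
            (EuclideanSpace ℝ (Fin d) →L[ℝ] EuclideanSpace ℝ (Fin d))).symm
              : _ →L[ℝ] _).comp (fderiv ℝ (fderiv ℝ F) y) := by
      rw [e0]; exact LinearIsometryEquiv.comp_fderiv _
    have e4 : ‖fderiv ℝ (iteratedFDeriv ℝ 0 (fderiv ℝ F)) y‖
        = ‖fderiv ℝ (fderiv ℝ F) y‖ := by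
      rw [e3]
      exact ContinuousLinearMap.opNorm_ext _ _ fun z => by simp
    calc ‖fderiv ℝ (fderiv ℝ F) y‖ = ‖iteratedFDeriv ℝ 2 F y‖ := by
          rw [← e4, e1]; exact e2
      _ ≤ K₂ := hD2F y
  -- Lipschitz bounds
  have hFlip : ∀ a b, ‖F a - F b‖ ≤ L * ‖a - b‖ := fun a b =>
    Convex.norm_image_sub_le_of_norm_fderiv_le (fun y _ => hFd y) (fun y _ => hDF y)
      convex_univ (mem_univ b) (mem_univ a)
  have hDFlip : ∀ a b, ‖fderiv ℝ F a - fderiv ℝ F b‖ ≤ K₂ * ‖a - b‖ := fun a b =>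
    Convex.norm_image_sub_le_of_norm_fderiv_le (fun y _ => hDFd y) (fun y _ => hD2 y)
      convex_univ (mem_univ b) (mem_univ a)
  -- second-order (Taylor) bound on the symmetric difference
  set g : ℝ → EuclideanSpace ℝ (Fin d) :=
    fun t => F (x + t • w) + F (x - t • w) - (F x + F x) with hg_def
  have hline : ∀ t : ℝ, HasDerivAt (fun t : ℝ => x + t • w) w t := by
    intro t
    simpa using ((hasDerivAt_id t).smul_const w).const_add x
  have hline' : ∀ t : ℝ, HasDerivAt (fun t : ℝ => x - t • w) (-w) t := by
    intro t
    have h := (((hasDerivAt_id t).smul_const w).neg).const_add x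
    simpa [sub_eq_add_neg] using h
  have hg' : ∀ t : ℝ, HasDerivAt g
      (fderiv ℝ F (x + t • w) w - fderiv ℝ F (x - t • w) w) t := by
    intro t
    have h1 : HasDerivAt (fun t : ℝ => F (x + t • w)) (fderiv ℝ F (x + t • w) w) t :=
      (hFd _).hasFDerivAt.comp_hasDerivAt t (hline t)
    have h2 : HasDerivAt (fun t : ℝ => F (x - t • w)) (fderiv ℝ F (x - t • w) (-w)) t :=
      (hFd _).hasFDerivAt.comp_hasDerivAt t (hline' t)
    have := (h1.add h2).sub_const (F x + F x)
    simpa [hg_def, map_neg, sub_eq_add_neg] using this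
  have hB : ∀ t : ℝ, HasDerivAt (fun t : ℝ => K₂ * ‖w‖^2 * t^2) (K₂ * ‖w‖^2 * (2*t)) t := by
    intro t
    have := (hasDerivAt_pow 2 t).const_mul (K₂ * ‖w‖^2)
    simpa [pow_one] using this
  have hbound : ∀ t ∈ Ico (0:ℝ) 1,
      ‖fderiv ℝ F (x + t • w) w - fderiv ℝ F (x - t • w) w‖ ≤ K₂ * ‖w‖^2 * (2*t) := by
    intro t ht
    have h1 : ‖fderiv ℝ F (x + t • w) w - fderiv ℝ F (x - t • w) w‖
        ≤ ‖fderiv ℝ F (x + t • w) - fderiv ℝ F (x - t • w)‖ * ‖w‖ := by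
      have := (fderiv ℝ F (x + t • w) - fderiv ℝ F (x - t • w)).le_opNorm w
      simpa using this
    have h2 : ‖fderiv ℝ F (x + t • w) - fderiv ℝ F (x - t • w)‖
        ≤ K₂ * (2 * t * ‖w‖) := by
      have := hDFlip (x + t • w) (x - t • w)
      have he : (x + t • w) - (x - t • w) = (2*t) • w := by
        rw [two_mul, add_smul]; abel
      rw [he] at this
      rw [norm_smul] at this
      simpa [abs_of_nonneg ht.1, mul_assoc] using this
    calc ‖fderiv ℝ F (x + t • w) w - fderiv ℝ F (x - t • w) w‖
        ≤ (K₂ * (2 * t * ‖w‖)) * ‖w‖ :=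
          h1.trans (mul_le_mul_of_nonneg_right h2 (norm_nonneg w))
      _ = K₂ * ‖w‖^2 * (2*t) := by ring
  have htaylor : ‖g 1‖ ≤ K₂ * ‖w‖^2 := by
    have := image_norm_le_of_norm_deriv_right_le_deriv_boundary
      (f := g) (f' := fun t => fderiv ℝ F (x + t • w) w - fderiv ℝ F (x - t • w) w)
      (a := 0) (b := 1)
      (fun t _ => ((hg' t).continuousAt).continuousWithinAt)
      (fun t _ => (hg' t).hasDerivWithinAt)
      (by simp [hg_def]) hB hbound (right_mem_Icc.mpr zero_le_one)
    simpa using this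
  -- main estimate
  set u := F x - F (x - w) with hu_def
  set v := F x - F (x + w) with hv_def
  have hu : m * ‖w‖ ≤ ‖u‖ := by
    have := hlow x (x - w)
    simpa using this
  have hv : m * ‖w‖ ≤ ‖v‖ := by
    have := hlow x (x + w)
    simpa using this
  have hsum : ‖u + v‖ ≤ K₂ * ‖w‖^2 := by
    have he : u + v = -(g 1) := by
      simp only [hu_def, hv_def, hg_def, one_smul]
      abel
    rw [he, norm_neg]; exact htaylor
  have hdiff : ‖u - v‖ ≤ L * (‖w‖ + ‖w‖) := by
    have he : u - v = F (x + w) - F (x - w) := by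
      simp only [hu_def, hv_def]; abel
    rw [he]
    have := hFlip (x + w) (x - w)
    have he2 : (x + w) - (x - w) = w + w := by abel
    rw [he2] at this
    exact this.trans (mul_le_mul_of_nonneg_left (norm_add_le w w) hL.le)
  have hid : (inner ℝ (u + v) (u - v) : ℝ) = ‖u‖^2 - ‖v‖^2 :=
    inner_add_sub_eq_norm_sq_sub u v
  have habs : |‖u‖^2 - ‖v‖^2| ≤ (K₂ * ‖w‖^2) * (L * (‖w‖ + ‖w‖)) := by
    rw [← hid]
    exact (abs_real_inner_le_norm _ _).trans
      (mul_le_mul hsum hdiff (norm_nonneg _) (by positivity))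
  have hfactor : |‖u‖ - ‖v‖| * (‖u‖ + ‖v‖) = |‖u‖^2 - ‖v‖^2| := by
    rw [← abs_of_nonneg (a := ‖u‖ + ‖v‖) (by positivity), ← abs_mul]
    congr 1; ring
  have hlowsum : m * ‖w‖ + m * ‖w‖ ≤ ‖u‖ + ‖v‖ := add_le_add hu hv
  have hkey : |‖u‖ - ‖v‖| * (m * ‖w‖ + m * ‖w‖) ≤ (K₂ * ‖w‖^2) * (L * (‖w‖ + ‖w‖)) := by
    calc |‖u‖ - ‖v‖| * (m * ‖w‖ + m * ‖w‖) ≤ |‖u‖ - ‖v‖| * (‖u‖ + ‖v‖) :=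
          mul_le_mul_of_nonneg_left hlowsum (abs_nonneg _)
      _ = |‖u‖^2 - ‖v‖^2| := hfactor
      _ ≤ _ := habs
  have hgoal : |‖u‖ - ‖v‖| ≤ (L * K₂ / m) * ‖w‖^2 := by
    rw [div_mul_eq_mul_div, le_div_iff₀ hm]
    nlinarith [hkey, hw', mul_pos hm hw', abs_nonneg (‖u‖ - ‖v‖)]
  calc |‖u‖ / ‖w‖ - ‖v‖ / ‖w‖| = |‖u‖ - ‖v‖| / ‖w‖ := by
        rw [← sub_div, abs_div, abs_of_pos hw']
    _ ≤ ((L * K₂ / m) * ‖w‖^2) / ‖w‖ := by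
        gcongr
    _ = (L * K₂ / m) * ‖w‖ := by
        field_simp
end

section
/- There exists a constant C > 0 such that for all b > 0, ∫_0^∞ e^{−r/8}·(1 + √r)·min(1, b²r²) dr ≤ C·(min(1, b²) + e^{−1/(16b)}). -/
open MeasureTheory

/-- There is `C > 0` such that for all `b > 0`:
`∫_0^∞ e^{-r/8} (1 + √r) min(1, b²r²) dr ≤ C (min(1, b²) + e^{-1/(16b)})`. -/
theorem integral_min_bound :
    ∃ C > 0, ∀ b > 0,
      (∫ r in Set.Ioi (0:ℝ),
          Real.exp (-r / 8) * (1 + Real.sqrt r) * min 1 (b ^ 2 * r ^ 2))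
        ≤ C * (min 1 (b ^ 2) + Real.exp (-1 / (16 * b))) := by
  -- dominating function
  set g : ℝ → ℝ := fun r => Real.exp (-r / 8) * (1 + Real.sqrt r) * (1 + r ^ 2) with hgdef
  have hterm : ∀ s : ℝ, -1 < s →
      IntegrableOn (fun r : ℝ => r ^ s * Real.exp (-(1/8) * r)) (Set.Ioi 0) := by
    intro s hs
    have := integrableOn_rpow_mul_exp_neg_mul_rpow (p := 1) hs (by norm_num) (by norm_num : (0:ℝ) < 1/8)
    simpa using this
  have hg : IntegrableOn g (Set.Ioi 0) := by
    have h0 := hterm 0 (by norm_num)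
    have h12 := hterm (1/2) (by norm_num)
    have h2 := hterm 2 (by norm_num)
    have h52 := hterm (5/2) (by norm_num)
    have hsum : IntegrableOn (fun r : ℝ =>
        r ^ (0:ℝ) * Real.exp (-(1/8) * r) + r ^ ((1:ℝ)/2) * Real.exp (-(1/8) * r)
        + r ^ (2:ℝ) * Real.exp (-(1/8) * r) + r ^ ((5:ℝ)/2) * Real.exp (-(1/8) * r))
        (Set.Ioi 0) := ((h0.add h12).add h2).add h52
    refine hsum.congr_fun ?_ measurableSet_Ioi
    intro r hr
    have hr0 : (0:ℝ) < r := hr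
    have hs : Real.sqrt r = r ^ ((1:ℝ)/2) := Real.sqrt_eq_rpow r
    have h0' : r ^ (0:ℝ) = 1 := Real.rpow_zero r
    have h2' : r ^ ((2:ℝ)) = r ^ 2 := by
      rw [show ((2:ℝ)) = ((2:ℕ):ℝ) by norm_num, Real.rpow_natCast]
    have h52' : r ^ ((5:ℝ)/2) = r ^ ((1:ℝ)/2) * r ^ 2 := by
      rw [← h2', ← Real.rpow_add hr0]; norm_num
    have hexp : Real.exp (-(1/8) * r) = Real.exp (-r / 8) := by ring_nf
    simp only [hgdef, hs, h0', h2', h52', hexp]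
    ring
  have hgnn : 0 ≤ ∫ r in Set.Ioi (0:ℝ), g r := by
    refine integral_nonneg fun r => ?_
    have := Real.sqrt_nonneg r
    have := Real.exp_nonneg (-r / 8)
    positivity
  refine ⟨(∫ r in Set.Ioi (0:ℝ), g r) + 1, by linarith, fun b hb => ?_⟩
  have hmnn : 0 ≤ min 1 (b ^ 2) := le_min one_pos.le (by positivity)
  have key : (∫ r in Set.Ioi (0:ℝ),
      Real.exp (-r / 8) * (1 + Real.sqrt r) * min 1 (b ^ 2 * r ^ 2))
      ≤ ∫ r in Set.Ioi (0:ℝ), min 1 (b ^ 2) * g r := by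
    refine integral_mono_of_nonneg ?_ (hg.const_mul _) ?_
    · filter_upwards with r
      have h1 := Real.sqrt_nonneg r
      have h2 := Real.exp_nonneg (-r / 8)
      have h3 : 0 ≤ min 1 (b ^ 2 * r ^ 2) := le_min one_pos.le (by positivity)
      positivity
    · filter_upwards with r
      have h1 := Real.sqrt_nonneg r
      have h2 := Real.exp_nonneg (-r / 8)
      have hmin : min 1 (b ^ 2 * r ^ 2) ≤ min 1 (b ^ 2) * (1 + r ^ 2) := by
        rcases le_total (b ^ 2) 1 with h | h
        · rw [min_eq_right h]
          calc min 1 (b ^ 2 * r ^ 2) ≤ b ^ 2 * r ^ 2 := min_le_right _ _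
            _ ≤ b ^ 2 * (1 + r ^ 2) := by nlinarith
        · rw [min_eq_left h]
          calc min 1 (b ^ 2 * r ^ 2) ≤ 1 := min_le_left _ _
            _ ≤ 1 * (1 + r ^ 2) := by nlinarith
      calc Real.exp (-r / 8) * (1 + Real.sqrt r) * min 1 (b ^ 2 * r ^ 2)
          ≤ Real.exp (-r / 8) * (1 + Real.sqrt r) * (min 1 (b ^ 2) * (1 + r ^ 2)) := by
            apply mul_le_mul_of_nonneg_left hmin (by positivity)
        _ = min 1 (b ^ 2) * g r := by simp only [hgdef]; ring
  rw [integral_const_mul] at key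
  have hexp : 0 < Real.exp (-1 / (16 * b)) := Real.exp_pos _
  calc (∫ r in Set.Ioi (0:ℝ),
      Real.exp (-r / 8) * (1 + Real.sqrt r) * min 1 (b ^ 2 * r ^ 2))
      ≤ min 1 (b ^ 2) * ∫ r in Set.Ioi (0:ℝ), g r := key
    _ ≤ ((∫ r in Set.Ioi (0:ℝ), g r) + 1) * (min 1 (b ^ 2) + Real.exp (-1 / (16 * b))) := by
        nlinarith
end
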